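/- arXiv:0911.4020 — 4 statements merged into one kernel-verified Lean document; each statement's English description precedes it below -/
import Mathlib

section
/- Let f and g be convex functions on an open convex set C ⊂ ℝⁿ and let d := f − g. Assume that for some x ∈ C and v ∈ ℝⁿ the two-sided directional derivatives f′(x,v) := lim_{t→0} (f(x+tv)−f(x))/t and g′(x,v) := lim_{t→0} (g(x+tv)−g(x))/t both exist and f′(x,v) ≠ g′(x,v). Then x is not a critical point of d. -/
open Filter Metric Set MeasureTheory Module
open scoped Topology NNReal ENNReal

noncomputable section

section BasicDefs

variable {E F : Type*} [NormedAddCommGroup E] [NormedSpace ℝ E]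
  [NormedAddCommGroup F] [NormedSpace ℝ F]

/-- The Clarke generalized directional derivative
`f⁰(a,v) = limsup_{z→a, t→0⁺} (f(z+tv)-f(z))/t`. -/
def clarkeDeriv (f : E → ℝ) (a v : E) : ℝ :=
  Filter.limsup (fun p : E × ℝ => (f (p.1 + p.2 • v) - f p.1) / p.2)
    ((𝓝 a) ×ˢ (𝓝[>] (0 : ℝ)))

/-- `a` is a critical point of `f` (in the sense of Clarke): `f⁰(a,v) ≥ 0` for every
direction `v`, i.e. `0` belongs to the Clarke subdifferential of `f` at `a`. -/
def IsCriticalPt (f : E → ℝ) (a : E) : Prop :=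
  ∀ v : E, 0 ≤ clarkeDeriv f a v

/-- `f` is locally Lipschitz on the set `G`. -/
def LocallyLipschitzOnSet (f : E → ℝ) (G : Set E) : Prop :=
  ∀ x ∈ G, ∃ K : ℝ≥0, ∃ t ∈ 𝓝 x, t ⊆ G ∧ LipschitzOnWith K f t

/-- `f` is DC (delta-convex) on the convex set `C`: a difference of two continuous
convex functions on `C`. -/
def DCOn (f : E → ℝ) (C : Set E) : Prop :=
  ∃ g h : E → ℝ, ConvexOn ℝ C g ∧ ConvexOn ℝ C h ∧
    ContinuousOn g C ∧ ContinuousOn h C ∧ ∀ x ∈ C, f x = g x - h x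

/-- `f` is locally DC on `G`: each point of `G` has a convex neighbourhood on which
`f` is DC. -/
def LocallyDCOn (f : E → ℝ) (G : Set E) : Prop :=
  ∀ x ∈ G, ∃ C : Set E, Convex ℝ C ∧ C ⊆ G ∧ C ∈ 𝓝 x ∧ DCOn f C

/-- A mapping into a finite-dimensional space is DC if its composition with every
linear functional is DC. -/
def DCOnMap (f : E → F) (C : Set E) : Prop :=
  ∀ φ : F →L[ℝ] ℝ, DCOn (fun x => φ (f x)) C

/-- Locally DC mapping. -/
def LocallyDCOnMap (f : E → F) (G : Set E) : Prop :=
  ∀ x ∈ G, ∃ C : Set E, Convex ℝ C ∧ C ⊆ G ∧ C ∈ 𝓝 x ∧ DCOnMap f C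

end BasicDefs

section InnerDefs

variable {H : Type*} [NormedAddCommGroup H] [InnerProductSpace ℝ H]

/-- `M` is a `k`-dimensional DC surface in the inner product space `H`
(a singleton when `k = 0`). -/
def IsDCSurface (M : Set H) (k : ℕ) : Prop :=
  M.Nonempty ∧
    ((k = 0 ∧ ∃ x, M = {x}) ∨
      (1 ≤ k ∧ ∀ x ∈ M, ∃ Q : Submodule ℝ H, Module.finrank ℝ Q = k ∧
        ∃ W : Set H, IsOpen W ∧ x ∈ W ∧ ∃ G₀ : Set Q, IsOpen G₀ ∧
          ∃ h : Q → Qᗮ, LocallyDCOnMap h G₀ ∧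
            M ∩ W = (fun u : Q => (u : H) + ((h u : H))) '' G₀))

/-- `u` is semiconcave with semiconcavity constant `c` on `C`:
`x ↦ u x - (c/2)‖x‖²` is concave on `C`. -/
def SemiconcaveOn (u : H → ℝ) (C : Set H) (c : ℝ) : Prop :=
  ConcaveOn ℝ C (fun x => u x - c / 2 * ‖x‖ ^ 2)

/-- `u` is locally semiconcave on the open set `G`: around every point of `G` there
is an open ball on which `u` is semiconcave for some constant. -/
def LocallySemiconcaveOn (u : H → ℝ) (G : Set H) : Prop :=
  ∀ x ∈ G, ∃ δ > 0, ball x δ ⊆ G ∧ ∃ c : ℝ, SemiconcaveOn u (ball x δ) c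

/-- `M` is a `k`-dimensional semiconcave surface in the inner product space `H`
(used with `k = dim H - 1`). -/
def IsSemiconcaveSurface (M : Set H) (k : ℕ) : Prop :=
  M.Nonempty ∧ ∀ x ∈ M, ∃ Q : Submodule ℝ H, Module.finrank ℝ Q = k ∧
    ∃ W : Set H, IsOpen W ∧ x ∈ W ∧ ∃ G₀ : Set Q, IsOpen G₀ ∧
      ∃ v : Qᗮ, v ≠ 0 ∧ ∃ s : Q → ℝ, LocallySemiconcaveOn s G₀ ∧
        M ∩ W = (fun u : Q => (u : H) + s u • (v : H)) '' G₀

end InnerDefs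

section MetricDefs

variable {X : Type*} [MetricSpace X]

/-- `q` has a unique nearest point in `A`. -/
def UniqueNearestPt (A : Set X) (q : X) : Prop :=
  ∃! y, y ∈ A ∧ dist q y = Metric.infDist q A

/-- `reach(A,p) > 0`: for some `ε > 0`, every point at distance `< ε` from `p`
has a unique nearest point in `A`. -/
def ReachPosAt (A : Set X) (p : X) : Prop :=
  ∃ ε > 0, ∀ q : X, dist p q < ε → UniqueNearestPt A q

/-- `A` has locally positive reach: `reach(A,p) > 0` for every `p ∈ A`. -/
def LocallyPositiveReach (A : Set X) : Prop :=
  ∀ p ∈ A, ReachPosAt A p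

/-- `A` has positive reach: `inf_{p ∈ A} reach(A,p) > 0`. -/
def PositiveReach (A : Set X) : Prop :=
  ∃ ε > 0, ∀ p ∈ A, ∀ q : X, dist p q < ε → UniqueNearestPt A q

/-- The set `S`, with its induced metric, is an `m`-dimensional Lipschitz manifold:
every point of `S` has a relatively open neighbourhood admitting a bilipschitz
homeomorphism onto an open subset of `ℝᵐ`. -/
def IsLipschitzManifoldSet (S : Set X) (m : ℕ) : Prop :=
  ∀ a ∈ S, ∃ U : Set X, IsOpen U ∧ a ∈ U ∧
    ∃ V : Set (EuclideanSpace ℝ (Fin m)), IsOpen V ∧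
      ∃ φ : X → EuclideanSpace ℝ (Fin m), φ '' (S ∩ U) = V ∧
        ∃ c C : ℝ, 0 < c ∧ ∀ x ∈ S ∩ U, ∀ y ∈ S ∩ U,
          c * dist x y ≤ dist (φ x) (φ y) ∧ dist (φ x) (φ y) ≤ C * dist x y

end MetricDefs

/-- The norm of `X` is (Fréchet) differentiable at every nonzero point and its
derivative is a Lipschitz map on the unit sphere. -/
def NormLipschitzDeriv (X : Type*) [NormedAddCommGroup X] [NormedSpace ℝ X] : Prop :=
  (∀ x : X, x ≠ 0 → DifferentiableAt ℝ (fun y : X => ‖y‖) x) ∧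
  ∃ K : ℝ≥0, LipschitzOnWith K (fun x : X => fderiv ℝ (fun y : X => ‖y‖) x)
    (Metric.sphere (0 : X) 1)


section Stmt1Aux

variable {E : Type*} [NormedAddCommGroup E] [NormedSpace ℝ E]

lemma slope_le_aux {C : Set E} {f : E → ℝ} (hf : ConvexOn ℝ C f) {z v : E} {t s : ℝ}
    (ht : 0 < t) (hts : t ≤ s) (hz : z ∈ C) (hzs : z + s • v ∈ C) :
    (f (z + t • v) - f z) / t ≤ (f (z + s • v) - f z) / s := by
  have hs : 0 < s := ht.trans_le hts
  have hb : 0 ≤ t / s := by positivity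
  have ha : 0 ≤ 1 - t / s := by
    have : t / s ≤ 1 := (div_le_one hs).2 hts
    linarith
  have h2 := hf.2 hz hzs ha hb (by ring)
  have h1 : (1 - t / s) • z + (t / s) • (z + s • v) = z + t • v := by
    match_scalars <;> field_simp <;> ring
  rw [h1] at h2
  rw [div_le_div_iff₀ ht hs]
  have h3 := mul_le_mul_of_nonneg_left h2 hs.le
  have h4 : s * ((1 - t / s) • f z + (t / s) • f (z + s • v))
      = (s - t) * f z + t * f (z + s • v) := by
    simp only [smul_eq_mul]
    field_simp
  rw [h4] at h3
  nlinarith [h3]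

lemma slope_ge_aux {C : Set E} {f : E → ℝ} (hf : ConvexOn ℝ C f) {z v : E} {t s : ℝ}
    (ht : 0 < t) (hs : 0 < s) (hzt : z + t • v ∈ C) (hzs : z - s • v ∈ C) :
    (f z - f (z - s • v)) / s ≤ (f (z + t • v) - f z) / t := by
  have hst : 0 < s + t := by linarith
  have ha : 0 ≤ s / (s + t) := by positivity
  have hb : 0 ≤ t / (s + t) := by positivity
  have hab : s / (s + t) + t / (s + t) = 1 := by field_simp
  have h2 := hf.2 hzt hzs ha hb hab
  have h1 : (s / (s + t)) • (z + t • v) + (t / (s + t)) • (z - s • v) = z := by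
    match_scalars <;> field_simp <;> ring
  rw [h1] at h2
  rw [div_le_div_iff₀ hs ht]
  have h3 := mul_le_mul_of_nonneg_left h2 hst.le
  have h4 : (s + t) * ((s / (s + t)) • f (z + t • v) + (t / (s + t)) • f (z - s • v))
      = s * f (z + t • v) + t * f (z - s • v) := by
    simp only [smul_eq_mul]
    field_simp
  rw [h4] at h3
  nlinarith [h3]

lemma neg_tendsto_ne : Filter.Tendsto (fun t : ℝ => -t) (𝓝[≠] (0:ℝ)) (𝓝[≠] (0:ℝ)) := by
  refine tendsto_nhdsWithin_of_tendsto_nhds_of_eventually_within _ ?_ ?_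
  · simpa using (continuous_neg.tendsto (0:ℝ)).mono_left nhdsWithin_le_nhds
  · filter_upwards [self_mem_nhdsWithin] with t ht
    simpa using ht

lemma clarke_le {C : Set E} [FiniteDimensional ℝ E] (hC : IsOpen C)
    {f g : E → ℝ} (hf : ConvexOn ℝ C f) (hg : ConvexOn ℝ C g)
    {x v : E} (hx : x ∈ C) {Lf Lg : ℝ}
    (hLf : Filter.Tendsto (fun t : ℝ => (f (x + t • v) - f x) / t) (𝓝[≠] 0) (𝓝 Lf))
    (hLg : Filter.Tendsto (fun t : ℝ => (g (x + t • v) - g x) / t) (𝓝[≠] 0) (𝓝 Lg)) :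
    clarkeDeriv (fun y => f y - g y) x v ≤ Lf - Lg := by
  obtain ⟨r, hr, hball⟩ := Metric.isOpen_iff.1 hC x hx
  have hfc : ContinuousOn f C := hf.continuousOn hC
  have hgc : ContinuousOn g C := hg.continuousOn hC
  set N : ℝ := ‖v‖ + 1 with hN
  have hNpos : 0 < N := by positivity
  -- membership helper
  have hmem : ∀ y : E, dist y x < r → y ∈ C := fun y hy => hball (mem_ball.2 hy)
  -- right-sided limits
  have hsub : 𝓝[>] (0:ℝ) ≤ 𝓝[≠] (0:ℝ) := nhdsWithin_mono 0 (fun t ht => ne_of_gt ht)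
  have hLf' : Tendsto (fun s : ℝ => (f (x + s • v) - f x) / s) (𝓝[>] 0) (𝓝 Lf) :=
    hLf.mono_left hsub
  have hLg' : Tendsto (fun s : ℝ => (g (x - s • v) - g x) / s) (𝓝[>] 0) (𝓝 (-Lg)) := by
    have h0 : Tendsto (fun s : ℝ => -s) (𝓝[>] (0:ℝ)) (𝓝[≠] (0:ℝ)) :=
      neg_tendsto_ne.comp hsub
    have := (hLg.comp h0).neg
    refine this.congr fun s => ?_
    simp only [Function.comp]
    rw [neg_smul, ← sub_eq_add_neg, div_neg, neg_neg]
  have hU : Tendsto (fun s : ℝ => (f (x + s • v) - f x) / s + (g (x - s • v) - g x) / s)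
      (𝓝[>] 0) (𝓝 (Lf - Lg)) := by
    have := hLf'.add hLg'
    simpa [sub_eq_add_neg] using this
  refine ge_of_tendsto hU ?_
  have hIoo : Set.Ioo (0:ℝ) (r / (4 * N)) ∈ 𝓝[>] (0:ℝ) :=
    Ioo_mem_nhdsGT_of_mem ⟨le_refl 0, by positivity⟩
  filter_upwards [hIoo] with s hs
  obtain ⟨hs0, hsN⟩ := hs
  have hsv : s * ‖v‖ < r / 4 := by
    calc s * ‖v‖ ≤ s * N := by nlinarith [norm_nonneg v]
    _ < r / (4 * N) * N := by nlinarith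
    _ = r / 4 := by field_simp
  -- memberships of key points
  have hmemx : ∀ a : ℝ, |a| ≤ s → x + a • v ∈ C := by
    intro a ha
    apply hmem
    have : dist (x + a • v) x = ‖a • v‖ := by
      rw [dist_eq_norm]; congr 1; abel
    rw [this, norm_smul]
    calc |a| * ‖v‖ ≤ s * ‖v‖ := by
          apply mul_le_mul_of_nonneg_right ha (norm_nonneg v)
      _ < r / 4 := hsv
      _ < r := by linarith
  -- the product filter
  set P : Filter (E × ℝ) := (𝓝 x) ×ˢ (𝓝[>] (0:ℝ)) with hP
  haveI : P.NeBot := Filter.prod_neBot.2 ⟨inferInstance, inferInstance⟩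
  have hP_le : P ≤ 𝓝 (x, (0:ℝ)) := by
    rw [nhds_prod_eq]
    exact Filter.prod_mono le_rfl nhdsWithin_le_nhds
  -- basic event: z close, t small
  have hev : (ball x (r/4)) ×ˢ (Set.Ioo (0:ℝ) s) ∈ P :=
    Filter.prod_mem_prod (ball_mem_nhds x (by positivity))
      (Ioo_mem_nhdsGT_of_mem ⟨le_refl 0, hs0⟩)
  -- memberships for (z,t) in the event
  have hmemz : ∀ z : E, z ∈ ball x (r/4) → ∀ a b : ℝ, |a| ≤ s → |b| ≤ s →
      z + a • v + b • v ∈ C := by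
    intro z hz a b ha hb
    apply hmem
    calc dist (z + a • v + b • v) x ≤ dist (z + a • v + b • v) z + dist z x :=
          dist_triangle _ _ _
      _ < (|a| + |b|) * ‖v‖ + r/4 := by
          have : dist (z + a • v + b • v) z = ‖a • v + b • v‖ := by
            rw [dist_eq_norm]; congr 1; abel
          rw [this]
          have h1 : ‖a • v + b • v‖ ≤ |a| * ‖v‖ + |b| * ‖v‖ := by
            calc ‖a • v + b • v‖ ≤ ‖a • v‖ + ‖b • v‖ := norm_add_le _ _
              _ = |a| * ‖v‖ + |b| * ‖v‖ := by rw [norm_smul, norm_smul]; rfl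
          have h2 : dist z x < r/4 := mem_ball.1 hz
          nlinarith [norm_nonneg v]
      _ ≤ 2 * s * ‖v‖ + r/4 := by nlinarith [norm_nonneg v, abs_nonneg a, abs_nonneg b]
      _ < r := by nlinarith
  -- upper bound function
  set U : E × ℝ → ℝ := fun p =>
    (f (p.1 + s • v) - f p.1) / s + (g (p.1 + p.2 • v - s • v) - g (p.1 + p.2 • v)) / s
    with hUdef
  set Lb : E × ℝ → ℝ := fun p =>
    (f p.1 - f (p.1 - s • v)) / s + (g (p.1 + p.2 • v) - g (p.1 + p.2 • v + s • v)) / s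
    with hLbdef
  set u : E × ℝ → ℝ := fun p =>
    ((fun y => f y - g y) (p.1 + p.2 • v) - (fun y => f y - g y) p.1) / p.2 with hudef
  -- eventual upper bound
  have h_ub : ∀ᶠ p in P, u p ≤ U p := by
    filter_upwards [hev] with p hp
    obtain ⟨hp1, hp2⟩ := hp
    obtain ⟨z, t⟩ := p
    simp only at hp1 hp2 ⊢
    obtain ⟨ht0, hts⟩ := hp2
    have hzC : z ∈ C := by
      have := hmemz z hp1 0 0 (by simp [hs0.le]) (by simp [hs0.le])
      simpa using this
    have hztC : z + t • v ∈ C := by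
      have := hmemz z hp1 t 0 (by rw [abs_of_pos ht0]; exact hts.le) (by simp [hs0.le])
      simpa using this
    have hzsC : z + s • v ∈ C := by
      have := hmemz z hp1 s 0 (by rw [abs_of_pos hs0]) (by simp [hs0.le])
      simpa using this
    have hztsC : z + t • v - s • v ∈ C := by
      have := hmemz z hp1 t (-s) (by rw [abs_of_pos ht0]; exact hts.le)
        (by rw [abs_neg, abs_of_pos hs0])
      simpa [sub_eq_add_neg, neg_smul] using this
    have hF := slope_le_aux hf ht0 hts.le hzC hzsC
    have hG := slope_le_aux hg (z := z + t • v) (v := -v) ht0 hts.le hztC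
      (by rw [smul_neg, ← sub_eq_add_neg]; exact hztsC)
    rw [smul_neg, smul_neg, ← sub_eq_add_neg, ← sub_eq_add_neg, add_sub_cancel_right] at hG
    have hsplit : u (z, t) = (f (z + t • v) - f z) / t + (g z - g (z + t • v)) / t := by
      simp only [hudef]
      ring
    rw [hsplit]
    exact add_le_add hF hG
  -- eventual lower bound
  have h_lb : ∀ᶠ p in P, Lb p ≤ u p := by
    filter_upwards [hev] with p hp
    obtain ⟨hp1, hp2⟩ := hp
    obtain ⟨z, t⟩ := p
    simp only at hp1 hp2 ⊢
    obtain ⟨ht0, hts⟩ := hp2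
    have hztC : z + t • v ∈ C := by
      have := hmemz z hp1 t 0 (by rw [abs_of_pos ht0]; exact hts.le) (by simp [hs0.le])
      simpa using this
    have hzmsC : z - s • v ∈ C := by
      have := hmemz z hp1 (-s) 0 (by rw [abs_neg, abs_of_pos hs0]) (by simp [hs0.le])
      simpa [sub_eq_add_neg, neg_smul] using this
    have hztpsC : z + t • v + s • v ∈ C := by
      exact hmemz z hp1 t s (by rw [abs_of_pos ht0]; exact hts.le) (by rw [abs_of_pos hs0])
    have hzC : z ∈ C := by
      have := hmemz z hp1 0 0 (by simp [hs0.le]) (by simp [hs0.le])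
      simpa using this
    have hF := slope_ge_aux hf ht0 hs0 hztC hzmsC
    have hG := slope_ge_aux hg (z := z + t • v) (v := -v) ht0 hs0
      (by rw [smul_neg, ← sub_eq_add_neg, add_sub_cancel_right]; exact hzC)
      (by rw [smul_neg, sub_neg_eq_add]; exact hztpsC)
    rw [smul_neg, smul_neg, sub_neg_eq_add, ← sub_eq_add_neg, add_sub_cancel_right] at hG
    have hsplit : u (z, t) = (f (z + t • v) - f z) / t + (g z - g (z + t • v)) / t := by
      simp only [hudef]
      ring
    rw [hsplit]
    exact add_le_add hF hG
  -- memberships at x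
  have hxs : x + s • v ∈ C := hmemx s (by rw [abs_of_pos hs0])
  have hxms : x - s • v ∈ C := by
    have := hmemx (-s) (by rw [abs_neg, abs_of_pos hs0])
    simpa [neg_smul, sub_eq_add_neg] using this
  -- continuity limits over P
  have cf : ∀ y : E, y ∈ C → ContinuousAt f y := fun y hy => hfc.continuousAt (hC.mem_nhds hy)
  have cg : ∀ y : E, y ∈ C → ContinuousAt g y := fun y hy => hgc.continuousAt (hC.mem_nhds hy)
  have inner1 : Tendsto (fun p : E × ℝ => p.1 + s • v) (𝓝 (x, (0:ℝ))) (𝓝 (x + s • v)) := by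
    have h : Continuous fun p : E × ℝ => p.1 + s • v := by fun_prop
    simpa using h.tendsto (x, (0:ℝ))
  have inner0 : Tendsto (fun p : E × ℝ => p.1) (𝓝 (x, (0:ℝ))) (𝓝 x) := continuous_fst.tendsto _
  have inner2 : Tendsto (fun p : E × ℝ => p.1 + p.2 • v - s • v) (𝓝 (x, (0:ℝ)))
      (𝓝 (x - s • v)) := by
    have h : Continuous fun p : E × ℝ => p.1 + p.2 • v - s • v := by fun_prop
    have := h.tendsto (x, (0:ℝ))
    simpa using this
  have inner3 : Tendsto (fun p : E × ℝ => p.1 + p.2 • v) (𝓝 (x, (0:ℝ))) (𝓝 x) := by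
    have h : Continuous fun p : E × ℝ => p.1 + p.2 • v := by fun_prop
    have := h.tendsto (x, (0:ℝ))
    simpa using this
  have inner4 : Tendsto (fun p : E × ℝ => p.1 + p.2 • v + s • v) (𝓝 (x, (0:ℝ)))
      (𝓝 (x + s • v)) := by
    have h : Continuous fun p : E × ℝ => p.1 + p.2 • v + s • v := by fun_prop
    have := h.tendsto (x, (0:ℝ))
    simpa using this
  have inner5 : Tendsto (fun p : E × ℝ => p.1 - s • v) (𝓝 (x, (0:ℝ))) (𝓝 (x - s • v)) := by
    have h : Continuous fun p : E × ℝ => p.1 - s • v := by fun_prop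
    simpa using h.tendsto (x, (0:ℝ))
  have hUP : Tendsto U P (𝓝 ((f (x + s • v) - f x) / s + (g (x - s • v) - g x) / s)) := by
    apply Tendsto.mono_left _ hP_le
    exact ((((cf _ hxs).tendsto.comp inner1).sub ((cf _ hx).tendsto.comp inner0)).div_const s).add
      ((((cg _ hxms).tendsto.comp inner2).sub ((cg _ hx).tendsto.comp inner3)).div_const s)
  have hLbP : Tendsto Lb P (𝓝 ((f x - f (x - s • v)) / s + (g x - g (x + s • v)) / s)) := by
    apply Tendsto.mono_left _ hP_le
    exact ((((cf _ hx).tendsto.comp inner0).sub ((cf _ hxms).tendsto.comp inner5)).div_const s).add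
      ((((cg _ hx).tendsto.comp inner3).sub ((cg _ hxs).tendsto.comp inner4)).div_const s)
  set Lstar : ℝ := (f x - f (x - s • v)) / s + (g x - g (x + s • v)) / s with hLstar
  have hco : Filter.IsCoboundedUnder (· ≤ ·) P u := by
    apply Filter.isCoboundedUnder_le_of_eventually_le P (x := Lstar - 1)
    filter_upwards [h_lb, hLbP.eventually (eventually_gt_nhds (sub_one_lt Lstar))] with p h1 h2
    linarith
  have hbdd : Filter.IsBoundedUnder (· ≤ ·) P U := hUP.isBoundedUnder_le
  calc clarkeDeriv (fun y => f y - g y) x v = Filter.limsup u P := rfl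
    _ ≤ Filter.limsup U P := Filter.limsup_le_limsup h_ub hco hbdd
    _ = (f (x + s • v) - f x) / s + (g (x - s • v) - g x) / s := hUP.limsup_eq

end Stmt1Aux

/-- if the two-sided directional derivatives of the convex functions
`f` and `g` at `x` in the direction `v` exist and differ, then `x` is not a
critical point of `d = f - g`. -/
theorem stmt1 {n : ℕ} {C : Set (EuclideanSpace ℝ (Fin n))} (hC : IsOpen C)
    (hCconv : Convex ℝ C) {f g : EuclideanSpace ℝ (Fin n) → ℝ}
    (hf : ConvexOn ℝ C f) (hg : ConvexOn ℝ C g)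
    {x v : EuclideanSpace ℝ (Fin n)} (hx : x ∈ C) {Lf Lg : ℝ}
    (hLf : Filter.Tendsto (fun t : ℝ => (f (x + t • v) - f x) / t) (𝓝[≠] 0) (𝓝 Lf))
    (hLg : Filter.Tendsto (fun t : ℝ => (g (x + t • v) - g x) / t) (𝓝[≠] 0) (𝓝 Lg))
    (hne : Lf ≠ Lg) :
    ¬ IsCriticalPt (fun y => f y - g y) x := by
  intro hcrit
  have h1 := clarke_le hC hf hg hx hLf hLg
  have hLf2 : Filter.Tendsto (fun t : ℝ => (f (x + t • (-v)) - f x) / t) (𝓝[≠] 0)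
      (𝓝 (-Lf)) := by
    have := (hLf.comp neg_tendsto_ne).neg
    refine this.congr fun t => ?_
    simp only [Function.comp]
    rw [div_neg, neg_neg, neg_smul, ← smul_neg]
  have hLg2 : Filter.Tendsto (fun t : ℝ => (g (x + t • (-v)) - g x) / t) (𝓝[≠] 0)
      (𝓝 (-Lg)) := by
    have := (hLg.comp neg_tendsto_ne).neg
    refine this.congr fun t => ?_
    simp only [Function.comp]
    rw [div_neg, neg_neg, neg_smul, ← smul_neg]
  have h2 := clarke_le hC hf hg hx hLf2 hLg2
  exact hne (le_antisymm (by linarith [hcrit (-v)]) (by linarith [hcrit v]))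
end
end

section
/- Let f be a convex function on an open convex set C ⊂ ℝⁿ, let x ∈ C and v ∈ ℝⁿ, and suppose that the two-sided directional derivative f′(x,v) := lim_{t→0} (f(x+tv)−f(x))/t exists. Then the full limit lim_{y→x, t→0⁺} (f(y+tv) − f(y))/t exists and equals f′(x,v). -/
open Filter Metric Set MeasureTheory Module
open scoped Topology NNReal ENNReal

noncomputable section

/-- for a convex function, existence of the two-sided directional
derivative `f′(x,v)` implies that the full limit `lim_{y→x, t→0⁺} (f(y+tv)-f(y))/t`
exists and equals `f′(x,v)` (the limit being taken over `y ∈ C` with `y + tv ∈ C`). -/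
theorem stmt2 {n : ℕ} {C : Set (EuclideanSpace ℝ (Fin n))} (hC : IsOpen C)
    (hCconv : Convex ℝ C) {f : EuclideanSpace ℝ (Fin n) → ℝ} (hf : ConvexOn ℝ C f)
    {x v : EuclideanSpace ℝ (Fin n)} (hx : x ∈ C) {L : ℝ}
    (hL : Filter.Tendsto (fun t : ℝ => (f (x + t • v) - f x) / t) (𝓝[≠] 0) (𝓝 L)) :
    Filter.Tendsto
      (fun p : EuclideanSpace ℝ (Fin n) × ℝ => (f (p.1 + p.2 • v) - f p.1) / p.2)
      (((𝓝[C] x) ×ˢ (𝓝[>] (0 : ℝ))) ⊓ 𝓟 {p | p.1 + p.2 • v ∈ C}) (𝓝 L) := by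
  have hcont : ContinuousOn f C := hf.continuousOn hC
  rw [Metric.tendsto_nhds]
  intro ε hε
  rw [Metric.tendsto_nhdsWithin_nhds] at hL
  obtain ⟨δ, hδ, hLδ⟩ := hL (ε / 4) (by linarith)
  obtain ⟨r, hr, hrC⟩ := Metric.isOpen_iff.mp hC x hx
  set s : ℝ := min (δ / 2) (r / (2 * (‖v‖ + 1))) with hsdef
  have hv1 : (0:ℝ) < ‖v‖ + 1 := by positivity
  have hs0 : 0 < s := lt_min (by linarith) (by positivity)
  have hsδ : s < δ := lt_of_le_of_lt (min_le_left _ _) (by linarith)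
  have hsv : s * ‖v‖ < r := by
    have h1 : s ≤ r / (2 * (‖v‖ + 1)) := min_le_right _ _
    have h2 : 0 ≤ ‖v‖ := norm_nonneg v
    have key : r / (2 * (‖v‖ + 1)) * ‖v‖ < r := by
      rw [div_mul_eq_mul_div, div_lt_iff₀ (by positivity)]
      nlinarith
    linarith [mul_le_mul_of_nonneg_right h1 h2, key]
  have hdistp : ∀ τ : ℝ, |τ| ≤ s → x + τ • v ∈ C := by
    intro τ hτ
    apply hrC
    rw [Metric.mem_ball, dist_eq_norm, add_sub_cancel_left, norm_smul, Real.norm_eq_abs]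
    calc |τ| * ‖v‖ ≤ s * ‖v‖ := mul_le_mul_of_nonneg_right hτ (norm_nonneg v)
      _ < r := hsv
  have hxp : x + s • v ∈ C := hdistp s (by rw [abs_of_pos hs0])
  have hxm : x + (-s) • v ∈ C := hdistp (-s) (by rw [abs_neg, abs_of_pos hs0])
  have h1 : |(f (x + s • v) - f x) / s - L| < ε / 4 := by
    have := hLδ (by simp [hs0.ne'] : s ∈ ({0}ᶜ : Set ℝ))
      (by rwa [Real.dist_eq, sub_zero, abs_of_pos hs0])
    rwa [Real.dist_eq] at this
  have h2 : |(f (x + (-s) • v) - f x) / (-s) - L| < ε / 4 := by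
    have := hLδ (by simp [hs0.ne'] : (-s) ∈ ({0}ᶜ : Set ℝ))
      (by rw [Real.dist_eq, sub_zero, abs_neg, abs_of_pos hs0]; exact hsδ)
    rwa [Real.dist_eq] at this
  set η : ℝ := ε * s / 8 with hηdef
  have hη : 0 < η := by positivity
  have hcx : ContinuousAt f x := hcont.continuousAt (hC.mem_nhds hx)
  have hcp : ContinuousAt f (x + s • v) := hcont.continuousAt (hC.mem_nhds hxp)
  have hcm : ContinuousAt f (x + (-s) • v) := hcont.continuousAt (hC.mem_nhds hxm)
  have tp : Continuous fun y : EuclideanSpace ℝ (Fin n) => y + s • v :=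
    continuous_id.add continuous_const
  have tm : Continuous fun y : EuclideanSpace ℝ (Fin n) => y + (-s) • v :=
    continuous_id.add continuous_const
  have E1 : ∀ᶠ y in 𝓝 x, y ∈ C := hC.mem_nhds hx
  have E2 : ∀ᶠ y in 𝓝 x, y + s • v ∈ C := (tp.tendsto x).eventually (hC.mem_nhds hxp)
  have E3 : ∀ᶠ y in 𝓝 x, y + (-s) • v ∈ C := (tm.tendsto x).eventually (hC.mem_nhds hxm)
  have E4 : ∀ᶠ y in 𝓝 x, |f y - f x| < η := by
    have := hcx.eventually (Metric.ball_mem_nhds (f x) hη)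
    simpa [Real.dist_eq] using this
  have E5 : ∀ᶠ y in 𝓝 x, |f (y + s • v) - f (x + s • v)| < η := by
    have := (hcp.tendsto.comp (tp.tendsto x)).eventually
      (Metric.ball_mem_nhds (f (x + s • v)) hη)
    simpa [Real.dist_eq, Function.comp] using this
  have E6 : ∀ᶠ y in 𝓝 x, |f (y + (-s) • v) - f (x + (-s) • v)| < η := by
    have := (hcm.tendsto.comp (tm.tendsto x)).eventually
      (Metric.ball_mem_nhds (f (x + (-s) • v)) hη)
    simpa [Real.dist_eq, Function.comp] using this
  have Eall := E1.and (E2.and (E3.and (E4.and (E5.and E6))))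
  have Eall' : ∀ᶠ y in 𝓝[C] x, _ := Eall.filter_mono nhdsWithin_le_nhds
  have Et : ∀ᶠ t in 𝓝[>] (0:ℝ), t ∈ Ioo (0:ℝ) s :=
    Ioo_mem_nhdsGT hs0
  rw [eventually_inf_principal]
  filter_upwards [Filter.Eventually.prod_mk Eall' Et] with p hp hpS
  obtain ⟨y, t⟩ := p
  obtain ⟨⟨hyC, hypC, hymC, hfy, hfp, hfm⟩, ht0, hts⟩ := hp
  simp only [Set.mem_setOf_eq] at hpS
  -- convexity along the line through y in direction v
  set A : ℝ →ᵃ[ℝ] EuclideanSpace ℝ (Fin n) := AffineMap.lineMap y (y + v) with hAdef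
  have hA : ∀ τ : ℝ, A τ = y + τ • v := by
    intro τ
    simp [hAdef, AffineMap.lineMap_apply, add_sub_cancel_left]
    abel
  have hg : ConvexOn ℝ (A ⁻¹' C) (f ∘ A) := hf.comp_affineMap A
  have mem0 : (0:ℝ) ∈ A ⁻¹' C := by simp [Set.mem_preimage, hA 0, hyC]
  have memt : t ∈ A ⁻¹' C := by simp only [Set.mem_preimage, hA t]; exact hpS
  have mems : s ∈ A ⁻¹' C := by simp only [Set.mem_preimage, hA s]; exact hypC
  have memm : (-s) ∈ A ⁻¹' C := by simp only [Set.mem_preimage, hA (-s)]; exact hymC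
  have hup := hg.secant_mono mem0 memt mems (ne_of_gt ht0) (ne_of_gt hs0) (le_of_lt hts)
  have hlo := hg.secant_mono mem0 memm memt (ne_of_lt (neg_neg_iff_pos.mpr hs0))
    (ne_of_gt ht0) (by linarith)
  simp only [Function.comp_apply, hA, sub_zero, zero_smul, add_zero] at hup hlo
  -- arithmetic
  rw [Real.dist_eq, abs_lt]
  rw [abs_lt] at h1 h2 hfy hfp hfm
  have hq := And.intro hlo hup
  have hadd : ∀ a : ℝ, (a + ε * s / 4) / s = a / s + ε / 4 := by
    intro a
    rw [add_div, mul_div_assoc, mul_div_assoc, div_right_comm,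
      div_self hs0.ne', one_div, ← div_eq_mul_inv]
  have hsub : ∀ a : ℝ, (a - ε * s / 4) / s = a / s - ε / 4 := by
    intro a
    rw [sub_div, mul_div_assoc, mul_div_assoc, div_right_comm,
      div_self hs0.ne', one_div, ← div_eq_mul_inv]
  have key1 : (f (y + s • v) - f y) / s < L + ε / 2 := by
    have hnum : f (y + s • v) - f y < f (x + s • v) - f x + ε * s / 4 := by
      simp only [hηdef] at hfy hfp; linarith
    calc (f (y + s • v) - f y) / s < (f (x + s • v) - f x + ε * s / 4) / s :=
          (div_lt_div_iff_of_pos_right hs0).mpr hnum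
      _ = (f (x + s • v) - f x) / s + ε / 4 := hadd _
      _ < L + ε / 2 := by linarith [h1.2]
  have key2 : L - ε / 2 < (f (y + (-s) • v) - f y) / (-s) := by
    have hrw : ∀ a b : ℝ, (a - b) / (-s) = (b - a) / s := by
      intro a b; rw [div_neg, neg_div']; ring_nf
    rw [hrw] at h2 ⊢
    have hnum : f x - f (x + (-s) • v) - ε * s / 4 < f y - f (y + (-s) • v) := by
      simp only [hηdef] at hfy hfm; linarith
    calc L - ε / 2 < (f x - f (x + (-s) • v)) / s - ε / 4 := by linarith [h2.1]
      _ = (f x - f (x + (-s) • v) - ε * s / 4) / s := (hsub _).symm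
      _ < (f y - f (y + (-s) • v)) / s := (div_lt_div_iff_of_pos_right hs0).mpr hnum
  constructor <;> linarith [hq.1, hq.2]
end
end

section
/- Let U ⊂ ℝⁿ be a nonempty open convex set, let d : U → ℝ be continuous, let r ∈ ℝ, and suppose there exist points b, c ∈ U with d(b) > r and d(c) < r. Then H^{n−1}( {x ∈ U : d(x) = r} ) > 0. -/
open Filter Metric Set MeasureTheory Module
open scoped Topology NNReal ENNReal

noncomputable section

/-- if a continuous function `d` on a nonempty open convex set
`U ⊂ ℝⁿ` takes a value `> r` and a value `< r`, then the level set
`{x ∈ U : d x = r}` has positive `(n-1)`-dimensional Hausdorff measure. -/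
theorem stmt16 {n : ℕ} {U : Set (EuclideanSpace ℝ (Fin n))} (hUne : U.Nonempty)
    (hU : IsOpen U) (hUconv : Convex ℝ U)
    {d : EuclideanSpace ℝ (Fin n) → ℝ} (hd : ContinuousOn d U) {r : ℝ}
    {b c : EuclideanSpace ℝ (Fin n)} (hb : b ∈ U) (hc : c ∈ U)
    (hdb : r < d b) (hdc : d c < r) :
    0 < μH[(n : ℝ) - 1] {x ∈ U | d x = r} := by
  classical
  obtain ⟨m, rfl⟩ : ∃ m, n = m + 1 := by
    cases n with
    | zero =>
      exfalso
      have hbc : b = c := by ext i; exact i.elim0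
      rw [hbc] at hdb; linarith
    | succ m => exact ⟨m, rfl⟩
  set S : Set (EuclideanSpace ℝ (Fin (m + 1))) := {x ∈ U | d x = r} with hS
  have hbc : b ≠ c := by
    intro h; rw [h] at hdb; linarith
  set v : EuclideanSpace ℝ (Fin (m + 1)) := c - b with hv
  have hv0 : v ≠ 0 := sub_ne_zero.mpr (Ne.symm hbc)
  set Q : Submodule ℝ (EuclideanSpace ℝ (Fin (m + 1))) := (ℝ ∙ v)ᗮ with hQ
  have hfinQ : Module.finrank ℝ Q = m := by
    have h2 : Module.finrank ℝ (ℝ ∙ v) + Module.finrank ℝ Q = m + 1 := by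
      rw [hQ, Submodule.finrank_add_finrank_orthogonal, finrank_euclideanSpace_fin]
    rw [finrank_span_singleton hv0] at h2
    omega
  set P : EuclideanSpace ℝ (Fin (m + 1)) →L[ℝ] Q := Q.orthogonalProjectionOnto with hP
  have hPlip : LipschitzWith 1 P := by
    apply LipschitzWith.of_dist_le_mul
    intro x y
    rw [dist_eq_norm, dist_eq_norm, ← map_sub, NNReal.coe_one]
    simpa using P.le_of_opNorm_le (Submodule.orthogonalProjectionOnto_norm_le Q) (x - y)
  -- choose ε around b and c
  have hcb : ContinuousAt d b := hd.continuousAt (hU.mem_nhds hb)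
  have hcc : ContinuousAt d c := hd.continuousAt (hU.mem_nhds hc)
  have hnb : U ∩ d ⁻¹' Ioi r ∈ 𝓝 b :=
    Filter.inter_mem (hU.mem_nhds hb) (hcb.preimage_mem_nhds (Ioi_mem_nhds hdb))
  have hnc : U ∩ d ⁻¹' Iio r ∈ 𝓝 c :=
    Filter.inter_mem (hU.mem_nhds hc) (hcc.preimage_mem_nhds (Iio_mem_nhds hdc))
  obtain ⟨ε₁, hε₁, hball₁⟩ := Metric.mem_nhds_iff.mp hnb
  obtain ⟨ε₂, hε₂, hball₂⟩ := Metric.mem_nhds_iff.mp hnc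
  set ε : ℝ := min ε₁ ε₂ with hε
  have hεpos : 0 < ε := lt_min hε₁ hε₂
  have hPv : P v = 0 :=
    Submodule.orthogonalProjectionOnto_apply_of_mem_orthogonal
      (Submodule.le_orthogonal_orthogonal (ℝ ∙ v) (Submodule.mem_span_singleton_self v))
  -- key claim: every point of the ball around P b in Q is hit by P on S
  have key : ∀ w : Q, ‖w‖ < ε → ∃ x ∈ S, P x = P b + w := by
    intro w hw
    have hwb : b + (w : EuclideanSpace ℝ (Fin (m + 1))) ∈ U ∩ d ⁻¹' Ioi r := by
      apply hball₁
      simp only [mem_ball, dist_eq_norm, add_sub_cancel_left]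
      exact lt_of_lt_of_le hw (min_le_left _ _)
    have hwc : c + (w : EuclideanSpace ℝ (Fin (m + 1))) ∈ U ∩ d ⁻¹' Iio r := by
      apply hball₂
      simp only [mem_ball, dist_eq_norm, add_sub_cancel_left]
      exact lt_of_lt_of_le hw (min_le_right _ _)
    have hmemU : ∀ t ∈ Icc (0 : ℝ) 1, b + (w : EuclideanSpace ℝ (Fin (m + 1))) + t • v ∈ U := by
      intro t ht
      have hrepr : b + (w : EuclideanSpace ℝ (Fin (m + 1))) + t • v =
          (1 - t) • (b + (w : EuclideanSpace ℝ (Fin (m + 1)))) +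
            t • (c + (w : EuclideanSpace ℝ (Fin (m + 1)))) := by
        rw [hv]; module
      rw [hrepr]
      exact hUconv hwb.1 hwc.1 (by linarith [ht.2] : (0:ℝ) ≤ 1 - t) ht.1 (by ring)
    have hcont : ContinuousOn
        (fun t : ℝ => d (b + (w : EuclideanSpace ℝ (Fin (m + 1))) + t • v)) (Icc 0 1) := by
      intro t ht
      have hγ : Continuous fun t : ℝ =>
          b + (w : EuclideanSpace ℝ (Fin (m + 1))) + t • v :=
        continuous_const.add (continuous_id.smul continuous_const)
      have hca := ContinuousAt.comp (g := d)
        (f := fun s : ℝ => b + (w : EuclideanSpace ℝ (Fin (m + 1))) + s • v) (x := t)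
        (hd.continuousAt (hU.mem_nhds (hmemU t ht))) hγ.continuousAt
      exact hca.continuousWithinAt
    have h0 : r < d (b + (w : EuclideanSpace ℝ (Fin (m + 1))) + (0 : ℝ) • v) := by
      simpa using hwb.2
    have h1 : d (b + (w : EuclideanSpace ℝ (Fin (m + 1))) + (1 : ℝ) • v) < r := by
      have he1 : b + (w : EuclideanSpace ℝ (Fin (m + 1))) + (1 : ℝ) • v =
          c + (w : EuclideanSpace ℝ (Fin (m + 1))) := by rw [hv]; module
      rw [he1]; exact hwc.2
    obtain ⟨t, ht, hdt⟩ := intermediate_value_Icc' (by norm_num : (0 : ℝ) ≤ 1) hcont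
      ⟨le_of_lt h1, le_of_lt h0⟩
    refine ⟨b + (w : EuclideanSpace ℝ (Fin (m + 1))) + t • v, ⟨hmemU t ht, hdt⟩, ?_⟩
    rw [map_add, map_add, P.map_smul, hPv, smul_zero, add_zero,
      Submodule.orthogonalProjectionOnto_mem_subspace_eq_self]
  -- the linear isometry to Euclidean space and the identification with ι → ℝ
  set e : Q ≃ₗᵢ[ℝ] EuclideanSpace ℝ (Fin m) :=
    ((stdOrthonormalBasis ℝ Q).reindex (finCongr hfinQ)).repr with he
  set j : EuclideanSpace ℝ (Fin m) → (Fin m → ℝ) := ⇑(WithLp.equiv 2 (Fin m → ℝ)) with hj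
  set f : EuclideanSpace ℝ (Fin (m + 1)) → (Fin m → ℝ) := fun x => j (e (P x)) with hf
  have hflip : LipschitzWith 1 f := by
    have := ((PiLp.lipschitzWith_ofLp 2 (fun _ : Fin m => ℝ)).comp
      (e.isometry.lipschitz.comp hPlip))
    simp only [mul_one] at this; exact this
  set B : Set Q := ball (P b) ε with hB
  have himage : (fun q : Q => j (e q)) '' B ⊆ f '' S := by
    rintro y ⟨q, hq, rfl⟩
    obtain ⟨x, hx, hPx⟩ := key (q - P b) (by
      rw [mem_ball, dist_eq_norm] at hq; simpa using hq)
    refine ⟨x, hx, ?_⟩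
    have hq' : P b + (q - P b) = q := by abel
    show j (e (P x)) = j (e q)
    rw [hPx, hq']
  have hBopen : IsOpen ((fun q : Q => j (e q)) '' B) := by
    have himeq : (fun q : Q => j (e q)) '' B = j '' (e '' B) := by
      rw [Set.image_image]
    rw [himeq, hj, Equiv.image_eq_preimage_symm]
    exact ((e.toHomeomorph.isOpen_image).mpr isOpen_ball).preimage
      (PiLp.continuous_toLp 2 (fun _ : Fin m => ℝ))
  have hBne : ((fun q : Q => j (e q)) '' B).Nonempty :=
    ⟨j (e (P b)), ⟨P b, mem_ball_self hεpos, rfl⟩⟩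
  have hvolpos : 0 < volume ((fun q : Q => j (e q)) '' B) :=
    hBopen.measure_pos volume hBne
  have hμHeq : (μH[(m : ℝ)] : Measure (Fin m → ℝ)) = volume := by
    have := MeasureTheory.hausdorffMeasure_pi_real (ι := Fin m)
    simpa using this
  have hpos : 0 < μH[(m : ℝ)] (f '' S) := by
    rw [hμHeq]
    exact lt_of_lt_of_le hvolpos (measure_mono himage)
  have hle : μH[(m : ℝ)] (f '' S) ≤ μH[(m : ℝ)] S := by
    have := hflip.hausdorffMeasure_image_le (d := (m : ℝ)) (by positivity) S
    simpa using this
  have hcast : (((m : ℕ) + 1 : ℕ) : ℝ) - 1 = (m : ℝ) := by push_cast; ring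
  rw [hcast]
  exact lt_of_lt_of_le hpos hle
end
end

section
/- Let n ∈ {1,2}, let U ⊂ ℝⁿ be open, let f be a locally DC function on U, and let S := {x ∈ U : f is Fréchet differentiable at x and f′(x) = 0} be the set of stationary points of f. Then H^{n/2}( f(S) ) = 0. -/
open Filter Metric Set MeasureTheory Module
open scoped Topology NNReal ENNReal

noncomputable section

section Stmt18AuxSection
open scoped RealInnerProductSpace

namespace Stmt18

section InnerLemmas

variable {E : Type*} [NormedAddCommGroup E] [InnerProductSpace ℝ E]


variable {E : Type*} [NormedAddCommGroup E] [InnerProductSpace ℝ E]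

/-- AM-GM type inequality for inner products. -/
lemma inner_le_quarter_norm_add_sq (u v : E) :
    ⟪u, v⟫ ≤ ‖u + v‖ ^ 2 / 4 := by
  have h1 : ‖u + v‖ ^ 2 = ‖u‖ ^ 2 + 2 * ⟪u, v⟫ + ‖v‖ ^ 2 := norm_add_sq_real u v
  have h2 : (0:ℝ) ≤ ‖u - v‖ ^ 2 := sq_nonneg _
  have h3 : ‖u - v‖ ^ 2 = ‖u‖ ^ 2 - 2 * ⟪u, v⟫ + ‖v‖ ^ 2 := norm_sub_sq_real u v
  nlinarith

/-- A vector supporting a convex function up to first order at an interior-type point is a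
subgradient. -/
lemma subgradient_of_eventually {B : Set E} (hB : Convex ℝ B) {g : E → ℝ} (hg : ConvexOn ℝ B g)
    {x p : E} (hx : x ∈ B)
    (hyp : ∀ ε : ℝ, 0 < ε → ∀ᶠ z in 𝓝 x, z ∈ B → g x + ⟪p, z - x⟫ ≤ g z + ε * ‖z - x‖) :
    ∀ y ∈ B, g x + ⟪p, y - x⟫ ≤ g y := by
  intro y hy
  rcases eq_or_ne y x with rfl | hxy
  · simp
  have hnorm : (0:ℝ) < ‖y - x‖ := by
    rw [norm_pos_iff]
    exact sub_ne_zero.2 hxy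
  -- it suffices to show the inequality up to ε * ‖y - x‖ for all ε > 0
  have key : ∀ ε : ℝ, 0 < ε → g x + ⟪p, y - x⟫ ≤ g y + ε * ‖y - x‖ := by
    intro ε hε
    obtain ⟨V, hV, hVs⟩ := (hyp ε hε).exists_mem
    obtain ⟨δ, hδ, hball⟩ := Metric.mem_nhds_iff.1 hV
    -- choose t small
    obtain ⟨t, ht0, ht1, htδ⟩ : ∃ t : ℝ, 0 < t ∧ t ≤ 1 ∧ t * ‖y - x‖ < δ := by
      refine ⟨min 1 (δ / (2 * ‖y - x‖)), ?_, min_le_left _ _, ?_⟩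
      · exact lt_min one_pos (div_pos hδ (by linarith))
      · calc min 1 (δ / (2 * ‖y - x‖)) * ‖y - x‖ ≤ (δ / (2 * ‖y - x‖)) * ‖y - x‖ := by
              apply mul_le_mul_of_nonneg_right (min_le_right _ _) hnorm.le
        _ = δ / 2 := by field_simp
        _ < δ := by linarith
    set z := x + t • (y - x) with hz
    have hzB : z ∈ B := by
      have := hB hx hy (by linarith : (0:ℝ) ≤ 1 - t) ht0.le (by ring)
      have hzeq : (1 - t) • x + t • y = z := by
        rw [hz]; module
      rwa [hzeq] at this
    have hzV : z ∈ V := by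
      apply hball
      rw [Metric.mem_ball, dist_eq_norm]
      have hzx' : z - x = t • (y - x) := by rw [hz]; abel
      rw [hzx', norm_smul, Real.norm_eq_abs, abs_of_pos ht0]
      exact htδ
    have hineq := hVs z hzV hzB
    have hzx : z - x = t • (y - x) := by rw [hz]; abel
    have hconv : g z ≤ (1 - t) * g x + t * g y := by
      have := hg.2 hx hy (by linarith : (0:ℝ) ≤ 1 - t) ht0.le (by ring)
      have hzeq : (1 - t) • x + t • y = z := by rw [hz]; module
      rw [hzeq] at this
      simpa using this
    rw [hzx, real_inner_smul_right, norm_smul, Real.norm_eq_abs, abs_of_pos ht0] at hineq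
    -- hineq : g x + t * ⟪p, y-x⟫ ≤ g z + ε * (t * ‖y-x‖)
    nlinarith [hineq, hconv]
  by_contra hcon
  push_neg at hcon
  have hd : 0 < (g x + ⟪p, y - x⟫ - g y) / ‖y - x‖ := div_pos (by linarith) hnorm
  have := key _ (half_pos hd)
  have h2 : (g x + ⟪p, y - x⟫ - g y) / ‖y - x‖ / 2 * ‖y - x‖ =
      (g x + ⟪p, y - x⟫ - g y) / 2 := by
    field_simp
  rw [h2] at this
  linarith


end InnerLemmas

section CompleteInner

variable {E : Type*} [NormedAddCommGroup E] [InnerProductSpace ℝ E] [CompleteSpace E]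




/-- Existence of subgradients of convex continuous functions on open convex sets. -/
lemma exists_subgradient {B : Set E} (hB : Convex ℝ B) (hBo : IsOpen B) {h : E → ℝ}
    (hh : ConvexOn ℝ B h) (hc : ContinuousOn h B) {x : E} (hx : x ∈ B) :
    ∃ p : E, ∀ y ∈ B, h x + ⟪p, y - x⟫ ≤ h y := by
  classical
  -- strict epigraph
  set s : Set (E × ℝ) := {q | q.1 ∈ B ∧ h q.1 < q.2} with hs
  have hsconv : Convex ℝ s := by
    rintro ⟨y1, t1⟩ ⟨hy1, ht1⟩ ⟨y2, t2⟩ ⟨hy2, ht2⟩ a b ha hb hab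
    constructor
    · exact hB hy1 hy2 ha hb hab
    · have hcv := hh.2 hy1 hy2 ha hb hab
      have h1 : a * h y1 ≤ a * t1 := mul_le_mul_of_nonneg_left ht1.le ha
      have h2 : b * h y2 ≤ b * t2 := mul_le_mul_of_nonneg_left ht2.le hb
      rcases ha.lt_or_eq with ha' | ha'
      · have h1' : a * h y1 < a * t1 := by
          exact mul_lt_mul_of_pos_left ht1 ha'
        calc h (a • y1 + b • y2) ≤ a * h y1 + b * h y2 := by simpa using hcv
        _ < a * t1 + b * t2 := by linarith
      · have hb1 : b = 1 := by linarith
        have ha0 : a = 0 := ha'.symm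
        subst hb1; subst ha0
        calc h ((0:ℝ) • y1 + (1:ℝ) • y2) ≤ 0 * h y1 + 1 * h y2 := by simpa using hcv
        _ < 0 * t1 + 1 * t2 := by simpa using ht2
  have hsopen : IsOpen s := by
    rw [isOpen_iff_mem_nhds]
    rintro ⟨y, t⟩ ⟨hyB, hyt⟩
    have hcy : ContinuousAt h y := hc.continuousAt (hBo.mem_nhds hyB)
    have hcont : ContinuousAt (fun q : E × ℝ => q.2 - h q.1) (y, t) :=
      continuousAt_snd.sub (hcy.comp continuousAt_fst)
    have h1 : ∀ᶠ q : E × ℝ in 𝓝 (y, t), 0 < q.2 - h q.1 :=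
      hcont (Ioi_mem_nhds (by simpa using hyt))
    have h2 : ∀ᶠ q : E × ℝ in 𝓝 (y, t), q.1 ∈ B :=
      continuousAt_fst (hBo.mem_nhds hyB)
    filter_upwards [h1, h2] with q hq1 hq2
    exact ⟨hq2, by linarith⟩
  have hdisj : (x, h x) ∉ s := by
    rintro ⟨-, hlt⟩
    exact lt_irrefl _ hlt
  obtain ⟨φ, hφ⟩ := geometric_hahn_banach_open_point hsconv hsopen hdisj
  set c : ℝ := φ (0, 1) with hc1
  have hφsplit : ∀ (y : E) (t : ℝ), φ (y, t) = φ (y, 0) + t * c := by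
    intro y t
    have : (y, t) = (y, (0:ℝ)) + t • ((0:E), (1:ℝ)) := by
      simp [Prod.ext_iff]
    rw [this, map_add, φ.map_smul]
    simp [hc1, smul_eq_mul]
  have hcneg : c < 0 := by
    have hmem : ((x, h x + 1) : E × ℝ) ∈ s := ⟨hx, by show h x < h x + 1; linarith⟩
    have := hφ _ hmem
    rw [hφsplit x (h x + 1), hφsplit x (h x)] at this
    nlinarith
  have hkey : ∀ y ∈ B, φ (y, 0) + h y * c ≤ φ (x, 0) + h x * c := by
    intro y hy
    have hstep : ∀ u : ℝ, 0 < u → φ (y, 0) + h y * c + u * c < φ (x, 0) + h x * c := by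
      intro u hu
      have hmem : ((y, h y + u) : E × ℝ) ∈ s := ⟨hy, by show h y < h y + u; linarith⟩
      have := hφ _ hmem
      rw [hφsplit y (h y + u), hφsplit x (h x)] at this
      nlinarith
    by_contra hcon
    push_neg at hcon
    set d := φ (y, 0) + h y * c - (φ (x, 0) + h x * c) with hd
    have hd0 : 0 < d := by simp [hd]; linarith
    have := hstep (d / (-2 * c)) (div_pos hd0 (by linarith))
    have hcalc : d / (-2 * c) * c = -(d / 2) := by
      rw [div_mul_eq_mul_div, div_eq_iff (by linarith : (-2:ℝ) * c ≠ 0)]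
      ring
    nlinarith [this]
  -- construct the subgradient vector
  set ψ := (InnerProductSpace.toDual ℝ E).symm (φ.comp (ContinuousLinearMap.inl ℝ E ℝ)) with hψ
  have hψapp : ∀ v : E, ⟪ψ, v⟫ = φ (v, 0) := by
    intro v
    rw [hψ]
    have := InnerProductSpace.toDual_symm_apply (E := E) (𝕜 := ℝ)
      (y := φ.comp (ContinuousLinearMap.inl ℝ E ℝ)) (x := v)
    simpa using this
  refine ⟨(-c)⁻¹ • ψ, ?_⟩
  intro y hy
  have hk := hkey y hy
  have hinner : ⟪(-c)⁻¹ • ψ, y - x⟫ = (-c)⁻¹ * (φ (y - x, 0)) := by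
    rw [real_inner_smul_left, hψapp]
  have hsub : φ (y - x, 0) = φ (y, 0) - φ (x, 0) := by
    have : ((y - x, (0:ℝ)) : E × ℝ) = (y, 0) - (x, 0) := by simp [Prod.ext_iff]
    rw [this, map_sub]
  rw [hinner, hsub]
  have hcpos : 0 < -c := by linarith
  have hinvpos : 0 < (-c)⁻¹ := inv_pos.2 hcpos
  have hinv : (-c)⁻¹ * (-c) = 1 := inv_mul_cancel₀ hcpos.ne'
  have h1 : φ (y, 0) - φ (x, 0) ≤ (h y - h x) * (-c) := by nlinarith [hk]
  have h2 : (-c)⁻¹ * (φ (y, 0) - φ (x, 0)) ≤ (-c)⁻¹ * ((h y - h x) * (-c)) :=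
    mul_le_mul_of_nonneg_left h1 hinvpos.le
  rw [show (-c)⁻¹ * ((h y - h x) * (-c)) = (h y - h x) * ((-c)⁻¹ * (-c)) by ring, hinv,
    mul_one] at h2
  linarith


end CompleteInner

section Euclidean

variable {n : ℕ}

local notation "Eu" => EuclideanSpace ℝ (Fin n)




/-- Comparison of `n`-dimensional Hausdorff measure and Lebesgue measure on the
Euclidean space, with a (crude) finite constant. -/
lemma hausdorff_le_const_mul_volume :
    ∃ c : ℝ≥0∞, c ≠ ⊤ ∧ ∀ T : Set Eu, μH[(n:ℝ)] T ≤ c * volume T := by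
  set K : ℝ≥0 := (Fintype.card (Fin n) : ℝ≥0) ^ ((1:ℝ≥0∞) / 2).toReal with hK
  have hanti : AntilipschitzWith K (WithLp.equiv 2 (Fin n → ℝ)) :=
    PiLp.antilipschitzWith_ofLp 2 (fun _ : Fin n => ℝ)
  have hlip : LipschitzWith K (WithLp.equiv 2 (Fin n → ℝ)).symm :=
    hanti.to_rightInverse (Equiv.apply_symm_apply _)
  refine ⟨(K : ℝ≥0∞) ^ (n:ℝ), (ENNReal.rpow_lt_top_of_nonneg (by positivity)
    ENNReal.coe_ne_top).ne, fun T => ?_⟩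
  have himg : T = (WithLp.equiv 2 (Fin n → ℝ)).symm '' ((WithLp.equiv 2 (Fin n → ℝ)) '' T) :=
    (Equiv.symm_image_image _ T).symm
  have hpi : (μH[(n:ℝ)] : Measure (Fin n → ℝ)) = volume := by
    have := MeasureTheory.hausdorffMeasure_pi_real (ι := Fin n)
    simpa using this
  calc μH[(n:ℝ)] T
      = μH[(n:ℝ)] ((WithLp.equiv 2 (Fin n → ℝ)).symm '' ((WithLp.equiv 2 (Fin n → ℝ)) '' T)) := by
        rw [← himg]
    _ ≤ (K : ℝ≥0∞) ^ (n:ℝ) * μH[(n:ℝ)] ((WithLp.equiv 2 (Fin n → ℝ)) '' T) :=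
        hlip.hausdorffMeasure_image_le (by positivity) _
    _ = (K : ℝ≥0∞) ^ (n:ℝ) * volume ((WithLp.equiv 2 (Fin n → ℝ)) '' T) := by rw [hpi]
    _ = (K : ℝ≥0∞) ^ (n:ℝ) * volume T := by
        congr 1
        have hmp := EuclideanSpace.volume_preserving_symm_measurableEquiv_toLp (Fin n)
        have hemb : MeasurableEmbedding (MeasurableEquiv.toLp 2 (Fin n → ℝ)).symm :=
          (MeasurableEquiv.toLp 2 (Fin n → ℝ)).symm.measurableEmbedding
        have := hmp.measure_preimage_emb hemb
          ((WithLp.equiv 2 (Fin n → ℝ)) '' T)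
        rw [show (MeasurableEquiv.toLp 2 (Fin n → ℝ)).symm ⁻¹'
            ((WithLp.equiv 2 (Fin n → ℝ)) '' T) = T from ?_] at this
        · exact this.symm
        · have hco : ⇑(MeasurableEquiv.toLp 2 (Fin n → ℝ)).symm = ⇑(WithLp.equiv 2 (Fin n → ℝ)) :=
            rfl
          rw [hco]
          exact Equiv.preimage_image _ T

/-- The box with corner `c • a` and side `a`. -/
def box (c : Fin n → ℤ) (a : ℝ) : Set Eu :=
  {x : Eu | ∀ i, x i ∈ Set.Ico ((c i : ℝ) * a) ((c i : ℝ) * a + a)}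

lemma volume_box (c : Fin n → ℤ) {a : ℝ} (ha : 0 ≤ a) :
    volume (box c a) = ENNReal.ofReal a ^ n := by
  have hmp := EuclideanSpace.volume_preserving_symm_measurableEquiv_toLp (Fin n)
  have hemb : MeasurableEmbedding (MeasurableEquiv.toLp 2 (Fin n → ℝ)).symm :=
    (MeasurableEquiv.toLp 2 (Fin n → ℝ)).symm.measurableEmbedding
  have hbox : box c a = (MeasurableEquiv.toLp 2 (Fin n → ℝ)).symm ⁻¹'
      (Set.pi Set.univ fun i => Set.Ico ((c i : ℝ) * a) ((c i : ℝ) * a + a)) := by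
    ext x
    simp [box, MeasurableEquiv.coe_toLp_symm, Set.mem_pi]
  rw [hbox, hmp.measure_preimage_emb hemb]
  rw [volume_pi_pi]
  simp [Real.volume_Ico]

lemma dist_le_of_mem_box {c : Fin n → ℤ} {a : ℝ} (ha : 0 ≤ a) {x y : Eu}
    (hx : x ∈ box c a) (hy : y ∈ box c a) :
    dist x y ≤ (n + 1) * a := by
  have h1 : dist x y ≤ Real.sqrt (↑n * a ^ 2) := by
    rw [EuclideanSpace.dist_eq]
    apply Real.sqrt_le_sqrt
    calc (∑ i, dist (x i) (y i) ^ 2) ≤ ∑ _i : Fin n, a ^ 2 := by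
          apply Finset.sum_le_sum
          intro i _
          have hxi := hx i
          have hyi := hy i
          simp only [Set.mem_Ico] at hxi hyi
          have : |x i - y i| ≤ a := by
            rw [abs_le]; constructor <;> nlinarith [hxi.1, hxi.2, hyi.1, hyi.2]
          calc dist (x i) (y i) ^ 2 = |x i - y i| ^ 2 := by
                rw [Real.dist_eq]
          _ ≤ a ^ 2 := by nlinarith [abs_nonneg (x i - y i)]
    _ = ↑n * a ^ 2 := by simp [mul_comm]
  calc dist x y ≤ Real.sqrt (↑n * a ^ 2) := h1
  _ = Real.sqrt n * a := by
      rw [Real.sqrt_mul (Nat.cast_nonneg n), Real.sqrt_sq ha]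
  _ ≤ (n + 1) * a := by
      apply mul_le_mul_of_nonneg_right _ ha
      calc Real.sqrt n ≤ Real.sqrt ((n+1)^2) := by
            apply Real.sqrt_le_sqrt; push_cast; nlinarith [Nat.cast_nonneg (α := ℝ) n]
      _ = n + 1 := by
            rw [Real.sqrt_sq (by positivity)]

lemma abs_coord_le_norm (x : Eu) (i : Fin n) : |x i| ≤ ‖x‖ := by
  rw [EuclideanSpace.norm_eq]
  have : |x i| = Real.sqrt (|x i| ^ 2) := by
    rw [Real.sqrt_sq (abs_nonneg _)]
  rw [this]
  apply Real.sqrt_le_sqrt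
  have : |x i| ^ 2 = ‖x i‖ ^ 2 := by rw [Real.norm_eq_abs]
  rw [this]
  exact Finset.single_le_sum (f := fun j => ‖x j‖ ^ 2) (fun j _ => by positivity)
    (Finset.mem_univ i)





set_option maxHeartbeats 1000000 in
lemma chain_bound (hn : 0 < n) {A : Set Eu} {F : Eu → ℝ} {C : ℝ} (hC : 0 ≤ C)
    (hF : ∀ x ∈ A, ∀ y ∈ A, |F x - F y| ≤ C * dist x y ^ 2)
    {η : ℝ} (hη0 : 0 < η) (hη1 : η ≤ 1) {r : ℝ} (hr : 0 < r)
    {x : Eu} (hxA : x ∈ A)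
    (hden : ∀ ρ : ℝ, 0 < ρ → ρ ≤ r →
      ENNReal.ofReal (1 - (η/4)^n) * volume (closedBall x ρ) ≤
        volume (A ∩ closedBall x ρ))
    {y : Eu} (hyA : y ∈ A) (hxy : dist x y ≤ r/2) :
    |F x - F y| ≤ 18 * C * η * dist x y ^ 2 := by
  rcases eq_or_ne x y with rfl | hne
  · simp only [dist_self]
    have : |F x - F x| = 0 := by simp
    rw [this]
    positivity
  set d : ℝ := dist x y with hd
  have hd0 : 0 < d := dist_pos.2 hne
  set N : ℕ := ⌈1/η⌉₊ with hN
  have hN1 : 1 ≤ N := Nat.one_le_iff_ne_zero.2 (by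
    simp only [hN, ne_eq, Nat.ceil_eq_zero, not_le]
    positivity)
  have hNpos : (0:ℝ) < N := by exact_mod_cast Nat.lt_of_lt_of_le Nat.zero_lt_one hN1
  have hNge : 1/η ≤ (N:ℝ) := Nat.le_ceil _
  have hNle : (N:ℝ) ≤ 2/η := by
    have h1 : (N:ℝ) < 1/η + 1 := Nat.ceil_lt_add_one (by positivity)
    have h2 : (1:ℝ)/η + 1 ≤ 2/η := by
      rw [div_add' _ _ _ hη0.ne', div_le_div_iff₀ hη0 hη0]
      nlinarith
    linarith
  have hinvN : 1/(N:ℝ) ≤ η := by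
    rw [div_le_iff₀ hNpos]
    calc (1:ℝ) = η * (1/η) := by field_simp
    _ ≤ η * N := by apply mul_le_mul_of_nonneg_left hNge hη0.le
  set w : ℕ → Eu := fun i => x + ((i:ℝ)/(N:ℝ)) • (y - x) with hw
  have hw0 : w 0 = x := by simp [hw]
  have hwN : w N = y := by
    simp only [hw]
    rw [div_self hNpos.ne', one_smul]
    abel
  have hwdist : ∀ i, i ≤ N → dist x (w i) ≤ d := by
    intro i hi
    simp only [hw]
    rw [dist_self_add_right, norm_smul, Real.norm_eq_abs]
    have h1 : |(i:ℝ)/(N:ℝ)| ≤ 1 := by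
      rw [abs_of_nonneg (by positivity)]
      rw [div_le_one hNpos]
      exact_mod_cast hi
    have h2 : ‖y - x‖ = d := by rw [hd, dist_eq_norm, norm_sub_rev]
    rw [h2]
    nlinarith [h1, hd0.le]
  have hwstep : ∀ i : ℕ, dist (w i) (w (i+1)) = d / N := by
    intro i
    simp only [hw]
    rw [dist_add_left, dist_eq_norm, ← sub_smul, norm_smul, Real.norm_eq_abs]
    have h1 : (i:ℝ)/(N:ℝ) - ((i:ℕ)+1:ℝ)/(N:ℝ) = -(1/N) := by
      field_simp
      ring
    push_cast
    rw [h1, abs_neg, abs_of_nonneg (by positivity)]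
    rw [show ‖y - x‖ = d by rw [hd, dist_eq_norm, norm_sub_rev]]
    field_simp
  -- existence of chain points
  have hmid : ∀ i : ℕ, 0 < i → i < N → ∃ p, p ∈ A ∧ dist p (w i) ≤ η * d := by
    intro i hi0 hiN
    by_contra hcon
    push_neg at hcon
    -- the closed ball around w i of radius η d misses A
    set ρ : ℝ := (1+η) * d with hρ
    have hρpos : 0 < ρ := by positivity
    have hρr : ρ ≤ r := by nlinarith
    have hhole : A ∩ closedBall (w i) (η*d) = ∅ := by
      ext p
      simp only [Set.mem_inter_iff, Metric.mem_closedBall, Set.mem_empty_iff_false, iff_false,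
        not_and, not_le]
      intro hpA
      exact lt_of_not_ge fun hle => absurd hle (not_le.2 (hcon p hpA))
    have hballsub : closedBall (w i) (η*d) ⊆ closedBall x ρ := by
      apply closedBall_subset_closedBall'
      have := hwdist i hiN.le
      rw [dist_comm]
      nlinarith
    have hsub : A ∩ closedBall x ρ ⊆ closedBall x ρ \ closedBall (w i) (η*d) := by
      rintro p ⟨hpA, hpB⟩
      refine ⟨hpB, fun hc => ?_⟩
      have : p ∈ A ∩ closedBall (w i) (η*d) := ⟨hpA, hc⟩
      rw [hhole] at this
      exact this
    have hv1 : volume (A ∩ closedBall x ρ) ≤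
        volume (closedBall x ρ) - volume (closedBall (w i) (η*d)) := by
      calc volume (A ∩ closedBall x ρ) ≤ volume (closedBall x ρ \ closedBall (w i) (η*d)) :=
            measure_mono hsub
      _ = volume (closedBall x ρ) - volume (closedBall (w i) (η*d)) :=
            measure_diff hballsub measurableSet_closedBall.nullMeasurableSet
              measure_closedBall_lt_top.ne
    have hv2 := hden ρ hρpos hρr
    have hv3 : ENNReal.ofReal (1 - (η/4)^n) * volume (closedBall x ρ) +
        volume (closedBall (w i) (η*d)) ≤ volume (closedBall x ρ) := by
      have h4 : volume (closedBall (w i) (η*d)) ≤ volume (closedBall x ρ) :=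
        measure_mono hballsub
      calc ENNReal.ofReal (1 - (η/4)^n) * volume (closedBall x ρ) +
          volume (closedBall (w i) (η*d))
          ≤ (volume (closedBall x ρ) - volume (closedBall (w i) (η*d))) +
            volume (closedBall (w i) (η*d)) := by
            exact add_le_add (le_trans hv2 hv1) le_rfl
      _ = volume (closedBall x ρ) := tsub_add_cancel_of_le h4
    -- compute the volumes
    have hfr : finrank ℝ Eu = n := finrank_euclideanSpace_fin
    have hV : volume (closedBall x ρ) =
        ENNReal.ofReal (ρ ^ n) * volume (ball (0:Eu) 1) := by
      rw [Measure.addHaar_closedBall volume x hρpos.le, hfr]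
    have hv : volume (closedBall (w i) (η*d)) =
        ENNReal.ofReal ((η*d) ^ n) * volume (ball (0:Eu) 1) := by
      rw [Measure.addHaar_closedBall volume (w i) (by positivity : (0:ℝ) ≤ η*d), hfr]
    rw [hV, hv] at hv3
    set u := volume (ball (0:Eu) 1) with hu
    have hu0 : u ≠ 0 := (measure_ball_pos volume (0:Eu) one_pos).ne'
    have hut : u ≠ ⊤ := measure_ball_lt_top.ne
    rw [← mul_assoc, ← add_mul] at hv3
    have hv4 : ENNReal.ofReal (1 - (η/4)^n) * ENNReal.ofReal (ρ ^ n) +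
        ENNReal.ofReal ((η*d) ^ n) ≤ ENNReal.ofReal (ρ ^ n) := by
      exact (ENNReal.mul_le_mul_iff_left hu0 hut).1 hv3
    have he1 : (η/4)^n ≤ 1 := by
      apply pow_le_one₀ (by positivity)
      linarith
    rw [← ENNReal.ofReal_mul (by linarith : (0:ℝ) ≤ 1 - (η/4)^n),
      ← ENNReal.ofReal_add (mul_nonneg (by linarith) (by positivity)) (by positivity)] at hv4
    have hreal : (1 - (η/4)^n) * ρ ^ n + (η*d) ^ n ≤ ρ ^ n :=
      (ENNReal.ofReal_le_ofReal_iff (by positivity)).1 hv4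
    have hexp : (1 - (η/4)^n) * ρ ^ n = ρ ^ n - (η/4)^n * ρ ^ n := by ring
    have hkey : (η*d) ^ n ≤ (η/4)^n * ρ ^ n := by linarith
    rw [← mul_pow] at hkey
    have hlt : η/4 * ρ < η * d := by
      have h5 : 0 < η * d * (3 - η) := mul_pos (mul_pos hη0 hd0) (by linarith)
      rw [hρ]
      nlinarith [h5]
    have := pow_lt_pow_left₀ hlt (by positivity) hn.ne'
    linarith
  -- build the chain using choice
  have hmid' : ∀ i : ℕ, ∃ p, p ∈ A ∧ ((0 < i ∧ i < N) → dist p (w i) ≤ η * d) ∧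
      (i = 0 → p = x) ∧ (N ≤ i → p = y) := by
    intro i
    rcases Nat.eq_zero_or_pos i with rfl | hi0
    · exact ⟨x, hxA, fun h => absurd h.1 (lt_irrefl 0), fun _ => rfl,
        fun h => absurd h (by omega)⟩
    rcases lt_or_ge i N with hiN | hiN
    · obtain ⟨p, hpA, hpd⟩ := hmid i hi0 hiN
      exact ⟨p, hpA, fun _ => hpd, fun h => absurd h (by omega), fun h => absurd h (by omega)⟩
    · exact ⟨y, hyA, fun h => absurd h.2 (by omega), fun h => absurd h (by omega), fun _ => rfl⟩
  choose z hzA hzmid hz0 hzN using hmid'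
  have hz0' : z 0 = x := hz0 0 rfl
  have hzN' : z N = y := hzN N le_rfl
  have hzw : ∀ i, i ≤ N → dist (z i) (w i) ≤ η * d := by
    intro i hi
    rcases Nat.eq_zero_or_pos i with rfl | hi0
    · rw [hz0' , hw0, dist_self]; positivity
    rcases eq_or_lt_of_le hi with rfl | hiN
    · rw [hzN', hwN, dist_self]; positivity
    · exact hzmid i ⟨hi0, hiN⟩
  -- sum up
  have hstep : ∀ i : ℕ, i < N → dist (F (z i)) (F (z (i+1))) ≤ C * (3*η*d)^2 := by
    intro i hiN
    have h1 : dist (z i) (z (i+1)) ≤ 3*η*d := by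
      calc dist (z i) (z (i+1)) ≤ dist (z i) (w i) + dist (w i) (w (i+1)) +
            dist (w (i+1)) (z (i+1)) := dist_triangle4 _ _ _ _
      _ ≤ η*d + d/N + η*d := by
          have h1' := hzw i hiN.le
          have h2 := hzw (i+1) hiN
          have h3 := (hwstep i).le
          rw [dist_comm (w (i+1))]
          exact add_le_add (add_le_add h1' h3) h2
      _ ≤ 3*η*d := by
          have : d/N = d * (1/N) := by ring
          rw [this]
          have h4 : d * (1/(N:ℝ)) ≤ d * η := mul_le_mul_of_nonneg_left hinvN hd0.le
          nlinarith
    calc dist (F (z i)) (F (z (i+1))) = |F (z i) - F (z (i+1))| := Real.dist_eq _ _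
    _ ≤ C * dist (z i) (z (i+1)) ^ 2 := hF _ (hzA i) _ (hzA (i+1))
    _ ≤ C * (3*η*d)^2 := by
        apply mul_le_mul_of_nonneg_left _ hC
        apply pow_le_pow_left₀ dist_nonneg h1
  calc |F x - F y| = dist (F (z 0)) (F (z N)) := by
        rw [hz0', hzN', Real.dist_eq]
  _ ≤ ∑ i ∈ Finset.range N, dist (F (z i)) (F (z (i+1))) := dist_le_range_sum_dist (fun i => F (z i)) N
  _ ≤ ∑ _i ∈ Finset.range N, C * (3*η*d)^2 := by
        apply Finset.sum_le_sum
        intro i hi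
        exact hstep i (Finset.mem_range.1 hi)
  _ = (N:ℝ) * (C * (3*η*d)^2) := by
        rw [Finset.sum_const, Finset.card_range, nsmul_eq_mul]
  _ ≤ (2/η) * (C * (3*η*d)^2) := by
        apply mul_le_mul_of_nonneg_right hNle (by positivity)
  _ = 18 * C * η * d ^ 2 := by
        field_simp
        ring





lemma density_decomp (A : Set Eu) {e : ℝ} (he : 0 < e) :
    ∃ Bad : Set Eu, volume (A ∩ Bad) = 0 ∧
      ∀ x ∈ A, x ∉ Bad → ∃ m : ℕ, ∀ ρ : ℝ, 0 < ρ → ρ ≤ 1/(m+1) →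
        ENNReal.ofReal (1 - e) * volume (closedBall x ρ) ≤ volume (A ∩ closedBall x ρ) := by
  have hbes := Besicovitch.ae_tendsto_measure_inter_div (volume : Measure Eu) A
  rw [ae_iff] at hbes
  obtain ⟨T, hTsub, hTmeas, hT0⟩ := exists_measurable_superset_of_null hbes
  refine ⟨T, ?_, ?_⟩
  · have := Measure.restrict_apply (μ := (volume : Measure Eu)) (s := A) hTmeas
    rw [Set.inter_comm]
    rw [← this]
    exact hT0
  · intro x hxA hxT
    have htend : Tendsto (fun r => volume (A ∩ closedBall x r) / volume (closedBall x r))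
        (𝓝[>] (0:ℝ)) (𝓝 1) := by
      by_contra hcon
      exact hxT (hTsub hcon)
    have hlt1 : ENNReal.ofReal (1 - e) < 1 := by
      rcases le_or_gt 1 e with h | h
      · calc ENNReal.ofReal (1 - e) = 0 := by
              rw [ENNReal.ofReal_eq_zero]; linarith
        _ < 1 := zero_lt_one
      · rw [show (1:ℝ≥0∞) = ENNReal.ofReal 1 by simp]
        exact ENNReal.ofReal_lt_ofReal_iff_of_nonneg (by linarith) |>.2 (by linarith)
    have hev : ∀ᶠ ρ in 𝓝[>] (0:ℝ),
        ENNReal.ofReal (1 - e) <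
          volume (A ∩ closedBall x ρ) / volume (closedBall x ρ) :=
      htend (Ioi_mem_nhds hlt1)
    obtain ⟨δ, hδ0, hδsub⟩ := mem_nhdsGT_iff_exists_Ioc_subset.1 hev
    obtain ⟨m, hm⟩ := exists_nat_one_div_lt (show (0:ℝ) < δ from hδ0)
    refine ⟨m, fun ρ hρ0 hρm => ?_⟩
    have hρδ : ρ ∈ Ioc (0:ℝ) δ := ⟨hρ0, le_of_lt (lt_of_le_of_lt hρm (by exact_mod_cast hm))⟩
    have hlt := hδsub hρδ
    have hb0 : volume (closedBall x ρ) ≠ 0 := (measure_closedBall_pos volume x hρ0).ne'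
    have hbt : volume (closedBall x ρ) ≠ ⊤ := measure_closedBall_lt_top.ne
    exact (ENNReal.le_div_iff_mul_le (Or.inl hb0) (Or.inl hbt)).1 (le_of_lt hlt)

lemma holderOnWith_two {F : Eu → ℝ} {K : ℝ} (hK : 0 ≤ K) {s : Set Eu}
    (h : ∀ x ∈ s, ∀ y ∈ s, |F x - F y| ≤ K * dist x y ^ 2) :
    HolderOnWith (Real.toNNReal K) 2 F s := by
  intro x hx y hy
  have hd := h x hx y hy
  rw [edist_dist, edist_dist]
  have h1 : ENNReal.ofReal (dist x y) ^ ((2:ℝ≥0):ℝ) = ENNReal.ofReal (dist x y ^ 2) := by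
    rw [show ((2:ℝ≥0):ℝ) = (2:ℝ) by norm_num,
      ENNReal.ofReal_rpow_of_nonneg dist_nonneg (by norm_num), Real.rpow_two]
  rw [h1]
  have h2 : (Real.toNNReal K : ℝ≥0∞) = ENNReal.ofReal K := rfl
  rw [h2, ← ENNReal.ofReal_mul hK]
  apply ENNReal.ofReal_le_ofReal
  rw [Real.dist_eq]
  exact hd


set_option maxHeartbeats 1000000 in
lemma grid_bound (hn : 0 < n) {A : Set Eu} {F : Eu → ℝ} {C : ℝ} (hC : 0 ≤ C)
    (hF : ∀ x ∈ A, ∀ y ∈ A, |F x - F y| ≤ C * dist x y ^ 2)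
    {R : ℝ} (hR : 0 < R) (hA : A ⊆ ball (0:Eu) R)
    {η : ℝ} (hη0 : 0 < η) (hη1 : η ≤ 1) (m : ℕ)
    {cH : ℝ≥0∞} (hcH : ∀ T : Set Eu, μH[(n:ℝ)] T ≤ cH * volume T)
    {D : Set Eu} (hD : D ⊆ A)
    (hden : ∀ x ∈ D, ∀ ρ : ℝ, 0 < ρ → ρ ≤ 1/((m:ℝ)+1) →
      ENNReal.ofReal (1 - (η/4)^n) * volume (closedBall x ρ) ≤ volume (A ∩ closedBall x ρ)) :
    μH[(n:ℝ)/2] (F '' D) ≤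
      (Real.toNNReal (18*C*η) : ℝ≥0∞) ^ ((n:ℝ)/2) * cH * ENNReal.ofReal (2*R+6) ^ n := by
  set r : ℝ := 1/((m:ℝ)+1) with hrdef
  have hr0 : 0 < r := by positivity
  set a : ℝ := 1/(2*((m:ℝ)+1)*((n:ℝ)+1)) with hadef
  have ha0 : 0 < a := by positivity
  have ha14 : a ≤ 1/4 := by
    rw [hadef]
    rw [div_le_div_iff₀ (by positivity) (by norm_num)]
    have h1 : (1:ℝ) ≤ (m:ℝ)+1 := by
      have := Nat.cast_nonneg (α := ℝ) m; linarith
    have h2 : (2:ℝ) ≤ (n:ℝ)+1 := by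
      have : (1:ℝ) ≤ (n:ℝ) := by exact_mod_cast hn
      linarith
    nlinarith
  have hna : ((n:ℝ)+1)*a = r/2 := by
    rw [hadef, hrdef]
    field_simp
  set M : ℤ := ⌈R/a⌉ + 1 with hMdef
  have hM1 : 1 ≤ M := by
    have : (0:ℤ) < ⌈R/a⌉ := Int.ceil_pos.2 (by positivity)
    omega
  set I : Finset (Fin n → ℤ) := Fintype.piFinset (fun _ : Fin n => Finset.Icc (-M) M) with hI
  -- covering
  have hcover : D ⊆ ⋃ c ∈ I, box c a := by
    intro x hx
    have hxball : ‖x‖ < R := by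
      have := hA (hD hx)
      rwa [mem_ball_zero_iff] at this
    set c : Fin n → ℤ := fun i => ⌊x i / a⌋ with hc
    have hcbox : x ∈ box c a := by
      intro i
      constructor
      · calc ((c i : ℝ)) * a ≤ (x i / a) * a := by
              apply mul_le_mul_of_nonneg_right (Int.floor_le _) ha0.le
        _ = x i := by field_simp
      · have h1 : x i / a < (c i : ℝ) + 1 := Int.lt_floor_add_one _
        calc x i = (x i / a) * a := by field_simp
        _ < ((c i : ℝ) + 1) * a := by
              apply mul_lt_mul_of_pos_right h1 ha0
        _ = (c i : ℝ) * a + a := by ring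
    have hcI : c ∈ I := by
      rw [hI, Fintype.mem_piFinset]
      intro i
      rw [Finset.mem_Icc]
      have hxi : |x i| ≤ ‖x‖ := abs_coord_le_norm x i
      have hxiR : |x i| < R := lt_of_le_of_lt hxi hxball
      constructor
      · -- -M ≤ c i
        have h1 : x i / a - 1 < (c i : ℝ) := Int.sub_one_lt_floor _
        have h2 : -(R/a) ≤ x i / a := by
          rw [← neg_div]
          exact (div_le_div_iff_of_pos_right ha0).2 (by nlinarith [abs_nonneg (x i), neg_abs_le (x i)])
        have h3 : ((-M : ℤ) : ℝ) < (c i : ℝ) := by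
          push_cast [hMdef]
          have h4 : (R/a : ℝ) ≤ ⌈R/a⌉ := Int.le_ceil _
          have h5 : -(R/a) - 1 ≤ x i / a - 1 := by linarith
          push_cast at h4
          linarith
        exact_mod_cast h3.le
      · -- c i ≤ M
        have h1 : (c i : ℝ) ≤ x i / a := Int.floor_le _
        have h2 : x i / a ≤ R / a :=
          (div_le_div_iff_of_pos_right ha0).2 (by nlinarith [le_abs_self (x i)])
        have h3 : (c i : ℝ) ≤ (M:ℝ) := by
          push_cast [hMdef]
          have h4 : (R/a : ℝ) ≤ ⌈R/a⌉ := Int.le_ceil _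
          linarith
        exact_mod_cast h3
    exact Set.mem_biUnion hcI hcbox
  have himg : F '' D ⊆ ⋃ c ∈ I, F '' (D ∩ box c a) := by
    rintro - ⟨x, hxD, rfl⟩
    obtain ⟨c, hcI, hcbox⟩ := Set.mem_iUnion₂.1 (hcover hxD)
    exact Set.mem_biUnion hcI ⟨x, ⟨hxD, hcbox⟩, rfl⟩
  have hperc : ∀ c ∈ I, μH[(n:ℝ)/2] (F '' (D ∩ box c a)) ≤
      (Real.toNNReal (18*C*η) : ℝ≥0∞) ^ ((n:ℝ)/2) * (cH * ENNReal.ofReal a ^ n) := by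
    intro c _
    have hpair : ∀ x ∈ D ∩ box c a, ∀ y ∈ D ∩ box c a,
        |F x - F y| ≤ (18*C*η) * dist x y ^ 2 := by
      rintro x ⟨hxD, hxb⟩ y ⟨hyD, hyb⟩
      have hdxy : dist x y ≤ r/2 := by
        calc dist x y ≤ ((n:ℝ)+1)*a := dist_le_of_mem_box ha0.le hxb hyb
        _ = r/2 := hna
      have := chain_bound hn hC hF hη0 hη1 hr0 (hD hxD) (hden x hxD) (hD hyD) hdxy
      calc |F x - F y| ≤ 18 * C * η * dist x y ^ 2 := this
      _ = (18*C*η) * dist x y ^ 2 := by ring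
    have hhold : HolderOnWith (Real.toNNReal (18*C*η)) 2 F (D ∩ box c a) :=
      holderOnWith_two (by positivity) hpair
    have himgle := hhold.hausdorffMeasure_image_le (by norm_num : (0:ℝ≥0) < 2)
      (by positivity : (0:ℝ) ≤ (n:ℝ)/2)
    rw [show (((2:ℝ≥0)):ℝ) * ((n:ℝ)/2) = (n:ℝ) by push_cast; ring] at himgle
    calc μH[(n:ℝ)/2] (F '' (D ∩ box c a))
        ≤ (Real.toNNReal (18*C*η) : ℝ≥0∞) ^ ((n:ℝ)/2) * μH[(n:ℝ)] (D ∩ box c a) := himgle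
    _ ≤ (Real.toNNReal (18*C*η) : ℝ≥0∞) ^ ((n:ℝ)/2) * (cH * ENNReal.ofReal a ^ n) := by
        apply mul_le_mul_right
        calc μH[(n:ℝ)] (D ∩ box c a) ≤ μH[(n:ℝ)] (box c a) :=
              measure_mono Set.inter_subset_right
        _ ≤ cH * volume (box c a) := hcH _
        _ = cH * ENNReal.ofReal a ^ n := by rw [volume_box c ha0.le]
  -- sum up
  have hcard : ((I.card : ℕ) : ℝ≥0∞) * ENNReal.ofReal a ^ n ≤ ENNReal.ofReal (2*R+6) ^ n := by
    have hc1 : I.card = ((2*M+1).toNat)^n := by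
      rw [hI, Fintype.card_piFinset]
      simp only [Int.card_Icc]
      rw [Finset.prod_const, Finset.card_univ, Fintype.card_fin]
      congr 1
      omega
    rw [hc1]
    push_cast
    rw [← mul_pow]
    apply pow_le_pow_left' _ n
    rw [show (((2*M+1).toNat : ℕ) : ℝ≥0∞) = ENNReal.ofReal (((2*M+1).toNat : ℕ) : ℝ) from
      (ENNReal.ofReal_natCast _).symm]
    rw [← ENNReal.ofReal_mul (by positivity)]
    apply ENNReal.ofReal_le_ofReal
    have htn : (((2*M+1).toNat : ℕ) : ℝ) = ((2*M+1 : ℤ) : ℝ) := by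
      have : ((2*M+1).toNat : ℤ) = 2*M+1 := Int.toNat_of_nonneg (by omega)
      exact_mod_cast congrArg (Int.cast : ℤ → ℝ) this
    rw [htn]
    have hM2 : (M:ℝ) ≤ R/a + 2 := by
      rw [hMdef]
      push_cast
      have := Int.ceil_lt_add_one (R/a)
      linarith
    have hRa : (R/a)*a = R := by field_simp
    push_cast
    calc (2*(M:ℝ)+1) * a ≤ (2*(R/a+2)+1) * a := by
          apply mul_le_mul_of_nonneg_right _ ha0.le
          linarith
    _ = 2*R + 5*a := by
        field_simp
        ring
    _ ≤ 2*R+6 := by nlinarith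
  calc μH[(n:ℝ)/2] (F '' D) ≤ μH[(n:ℝ)/2] (⋃ c ∈ I, F '' (D ∩ box c a)) := measure_mono himg
  _ ≤ ∑ c ∈ I, μH[(n:ℝ)/2] (F '' (D ∩ box c a)) := measure_biUnion_finset_le I _
  _ ≤ ∑ _c ∈ I, (Real.toNNReal (18*C*η) : ℝ≥0∞) ^ ((n:ℝ)/2) * (cH * ENNReal.ofReal a ^ n) :=
      Finset.sum_le_sum hperc
  _ = (I.card : ℝ≥0∞) * ((Real.toNNReal (18*C*η) : ℝ≥0∞) ^ ((n:ℝ)/2) *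
      (cH * ENNReal.ofReal a ^ n)) := by
      rw [Finset.sum_const, nsmul_eq_mul]
  _ = (Real.toNNReal (18*C*η) : ℝ≥0∞) ^ ((n:ℝ)/2) * cH *
      ((I.card : ℝ≥0∞) * ENNReal.ofReal a ^ n) := by ring
  _ ≤ (Real.toNNReal (18*C*η) : ℝ≥0∞) ^ ((n:ℝ)/2) * cH * ENNReal.ofReal (2*R+6) ^ n :=
      mul_le_mul_right hcard _


set_option maxHeartbeats 1000000 in
lemma pure_bounded (hn : 0 < n) {A : Set Eu} {F : Eu → ℝ} {C : ℝ} (hC : 0 ≤ C)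
    (hF : ∀ x ∈ A, ∀ y ∈ A, |F x - F y| ≤ C * dist x y ^ 2)
    {R : ℝ} (hR : 0 < R) (hA : A ⊆ ball (0:Eu) R) :
    μH[(n:ℝ)/2] (F '' A) = 0 := by
  obtain ⟨cH, hcHt, hcH⟩ := hausdorff_le_const_mul_volume (n := n)
  have key : ∀ η : ℝ, 0 < η → η ≤ 1 →
      μH[(n:ℝ)/2] (F '' A) ≤
        ENNReal.ofReal ((18*C*η) ^ ((n:ℝ)/2)) * cH * ENNReal.ofReal (2*R+6) ^ n := by
    intro η hη0 hη1
    have he : 0 < (η/4)^n := by positivity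
    obtain ⟨Bad, hBad0, hgood⟩ := density_decomp A he
    set D : ℕ → Set Eu := fun m => {x | x ∈ A ∧ ∀ ρ : ℝ, 0 < ρ → ρ ≤ 1/((m:ℝ)+1) →
      ENNReal.ofReal (1 - (η/4)^n) * volume (closedBall x ρ) ≤
        volume (A ∩ closedBall x ρ)} with hD
    have hDmono : Monotone D := by
      intro m m' hmm' x hx
      refine ⟨hx.1, fun ρ hρ0 hρ => hx.2 ρ hρ0 (hρ.trans ?_)⟩
      apply one_div_le_one_div_of_le (by positivity)
      have : (m:ℝ) ≤ (m':ℝ) := by exact_mod_cast hmm'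
      linarith
    have hsub : A ⊆ (A ∩ Bad) ∪ ⋃ m, D m := by
      intro x hx
      by_cases hxB : x ∈ Bad
      · exact Or.inl ⟨hx, hxB⟩
      · obtain ⟨m, hm⟩ := hgood x hx hxB
        exact Or.inr (Set.mem_iUnion.2 ⟨m, ⟨hx, hm⟩⟩)
    have himg : F '' A ⊆ F '' (A ∩ Bad) ∪ F '' (⋃ m, D m) := by
      rw [← Set.image_union]
      exact Set.image_mono hsub
    have hnull : μH[(n:ℝ)/2] (F '' (A ∩ Bad)) = 0 := by
      have hhold : HolderOnWith (Real.toNNReal C) 2 F (A ∩ Bad) :=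
        holderOnWith_two hC (fun x hx y hy => hF x hx.1 y hy.1)
      have himgle := hhold.hausdorffMeasure_image_le (by norm_num : (0:ℝ≥0) < 2)
        (by positivity : (0:ℝ) ≤ (n:ℝ)/2)
      rw [show (((2:ℝ≥0)):ℝ) * ((n:ℝ)/2) = (n:ℝ) by push_cast; ring] at himgle
      refine le_antisymm ?_ zero_le
      calc μH[(n:ℝ)/2] (F '' (A ∩ Bad))
          ≤ (Real.toNNReal C : ℝ≥0∞) ^ ((n:ℝ)/2) * μH[(n:ℝ)] (A ∩ Bad) := himgle
      _ ≤ (Real.toNNReal C : ℝ≥0∞) ^ ((n:ℝ)/2) * (cH * volume (A ∩ Bad)) :=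
          mul_le_mul_right (hcH _) _
      _ = 0 := by rw [hBad0, mul_zero, mul_zero]
    have hmono2 : Monotone (fun m => F '' (D m)) := fun m m' h => Set.image_mono (hDmono h)
    have hgoodle : μH[(n:ℝ)/2] (F '' (⋃ m, D m)) ≤
        (Real.toNNReal (18*C*η) : ℝ≥0∞) ^ ((n:ℝ)/2) * cH * ENNReal.ofReal (2*R+6) ^ n := by
      rw [Set.image_iUnion, Monotone.measure_iUnion hmono2]
      apply iSup_le
      intro m
      exact grid_bound hn hC hF hR hA hη0 hη1 m hcH (fun x hx => hx.1) (fun x hx => hx.2)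
    have hofreal : (Real.toNNReal (18*C*η) : ℝ≥0∞) ^ ((n:ℝ)/2) =
        ENNReal.ofReal ((18*C*η) ^ ((n:ℝ)/2)) := by
      rw [show (Real.toNNReal (18*C*η) : ℝ≥0∞) = ENNReal.ofReal (18*C*η) from rfl]
      rw [ENNReal.ofReal_rpow_of_nonneg (by positivity) (by positivity)]
    calc μH[(n:ℝ)/2] (F '' A) ≤ μH[(n:ℝ)/2] (F '' (A ∩ Bad) ∪ F '' (⋃ m, D m)) :=
          measure_mono himg
    _ ≤ μH[(n:ℝ)/2] (F '' (A ∩ Bad)) + μH[(n:ℝ)/2] (F '' (⋃ m, D m)) := measure_union_le _ _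
    _ = μH[(n:ℝ)/2] (F '' (⋃ m, D m)) := by rw [hnull, zero_add]
    _ ≤ (Real.toNNReal (18*C*η) : ℝ≥0∞) ^ ((n:ℝ)/2) * cH * ENNReal.ofReal (2*R+6) ^ n :=
          hgoodle
    _ = ENNReal.ofReal ((18*C*η) ^ ((n:ℝ)/2)) * cH * ENNReal.ofReal (2*R+6) ^ n := by
          rw [hofreal]
  -- pass to the limit η → 0 along η = 1/(k+1)
  have hμle : ∀ k : ℕ, μH[(n:ℝ)/2] (F '' A) ≤
      ENNReal.ofReal ((18*C*(1/((k:ℝ)+1))) ^ ((n:ℝ)/2)) * cH * ENNReal.ofReal (2*R+6) ^ n := by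
    intro k
    apply key
    · positivity
    · rw [div_le_one (by positivity)]
      have : (0:ℝ) ≤ (k:ℝ) := Nat.cast_nonneg k
      linarith
  have htend : Tendsto (fun k : ℕ =>
      ENNReal.ofReal ((18*C*(1/((k:ℝ)+1))) ^ ((n:ℝ)/2)) * cH * ENNReal.ofReal (2*R+6) ^ n)
      atTop (𝓝 0) := by
    have h1 : Tendsto (fun k : ℕ => 18*C*(1/((k:ℝ)+1))) atTop (𝓝 0) := by
      have := tendsto_one_div_add_atTop_nhds_zero_nat.const_mul (18*C)
      simpa using this
    have h2 : Tendsto (fun k : ℕ => (18*C*(1/((k:ℝ)+1))) ^ ((n:ℝ)/2)) atTop (𝓝 0) := by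
      have hcont : ContinuousAt (fun x : ℝ => x ^ ((n:ℝ)/2)) 0 :=
        Real.continuousAt_rpow_const 0 ((n:ℝ)/2) (Or.inr (by positivity))
      have := hcont.tendsto.comp h1
      rwa [Real.zero_rpow (by positivity : ((n:ℝ)/2) ≠ 0)] at this
    have h3 : Tendsto (fun k : ℕ =>
        ENNReal.ofReal ((18*C*(1/((k:ℝ)+1))) ^ ((n:ℝ)/2))) atTop (𝓝 0) := by
      have := ENNReal.tendsto_ofReal h2
      simpa using this
    have h4 := ENNReal.Tendsto.mul_const h3 (Or.inr hcHt)
    rw [zero_mul] at h4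
    have h5 := ENNReal.Tendsto.mul_const (b := ENNReal.ofReal (2*R+6) ^ n) h4
      (Or.inr (ENNReal.pow_ne_top ENNReal.ofReal_ne_top))
    rwa [zero_mul] at h5
  refine le_antisymm ?_ zero_le
  exact ge_of_tendsto htend (Filter.Eventually.of_forall hμle)

lemma pure_lemma (hn : 0 < n) {A : Set Eu} {F : Eu → ℝ} {C : ℝ} (hC : 0 ≤ C)
    (hF : ∀ x ∈ A, ∀ y ∈ A, |F x - F y| ≤ C * dist x y ^ 2) :
    μH[(n:ℝ)/2] (F '' A) = 0 := by
  have hcover : F '' A ⊆ ⋃ k : ℕ, F '' (A ∩ ball (0:Eu) ((k:ℝ)+1)) := by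
    rintro - ⟨x, hx, rfl⟩
    obtain ⟨k, hk⟩ := exists_nat_gt ‖x‖
    refine Set.mem_iUnion.2 ⟨k, ⟨x, ⟨hx, ?_⟩, rfl⟩⟩
    rw [mem_ball_zero_iff]
    linarith
  refine le_antisymm ?_ zero_le
  calc μH[(n:ℝ)/2] (F '' A) ≤ μH[(n:ℝ)/2] (⋃ k : ℕ, F '' (A ∩ ball (0:Eu) ((k:ℝ)+1))) :=
        measure_mono hcover
  _ = 0 := by
      apply measure_iUnion_null
      intro k
      exact pure_bounded hn hC (fun x hx y hy => hF x hx.1 y hy.1)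
        (by positivity : (0:ℝ) < (k:ℝ)+1) Set.inter_subset_right


set_option maxHeartbeats 1000000 in
lemma piece (hn : 0 < n) {f : Eu → ℝ} {x₀ : Eu} {r : ℝ}
    {g h : Eu → ℝ} (hg : ConvexOn ℝ (ball x₀ r) g) (hh : ConvexOn ℝ (ball x₀ r) h)
    (hgc : ContinuousOn g (ball x₀ r)) (hhc : ContinuousOn h (ball x₀ r))
    (hfgh : ∀ y ∈ ball x₀ r, f y = g y - h y) :
    μH[(n:ℝ)/2] (f '' {x ∈ ball x₀ r | HasFDerivAt f (0 : Eu →L[ℝ] ℝ) x}) = 0 := by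
  classical
  set B : Set Eu := ball x₀ r with hBdef
  have hBo : IsOpen B := isOpen_ball
  have hBc : Convex ℝ B := convex_ball x₀ r
  set A : Set Eu := {x ∈ B | HasFDerivAt f (0 : Eu →L[ℝ] ℝ) x} with hAdef
  have hsel : ∀ a : Eu, ∃ p : Eu, a ∈ A →
      ((∀ y ∈ B, h a + ⟪p, y - a⟫ ≤ h y) ∧ (∀ y ∈ B, g a + ⟪p, y - a⟫ ≤ g y)) := by
    intro a
    by_cases ha : a ∈ A
    · obtain ⟨haB, haD⟩ := ha
      obtain ⟨p, hp⟩ := exists_subgradient hBc hBo hh hhc haB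
      have hpg : ∀ y ∈ B, g a + ⟪p, y - a⟫ ≤ g y := by
        apply subgradient_of_eventually hBc hg haB
        intro ε hε
        have hlo := haD.isLittleO
        simp only [ContinuousLinearMap.zero_apply, sub_zero] at hlo
        have hev := hlo.def hε
        filter_upwards [hev] with z hz hzB
        have hfz : |f z - f a| ≤ ε * ‖z - a‖ := by
          simpa [Real.norm_eq_abs] using hz
        have hgz : g z = f z + h z := by
          have := hfgh z hzB; linarith
        have hga : g a = f a + h a := by
          have := hfgh a haB; linarith
        have hhz := hp z hzB
        have habs := abs_le.1 hfz
        rw [hgz, hga]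
        linarith [habs.1, habs.2, hhz]
      exact ⟨p, fun _ => ⟨hp, hpg⟩⟩
    · exact ⟨0, fun hc => absurd hc ha⟩
  choose P hP using hsel
  set σ : Eu → Eu := fun a => a + P a with hσdef
  have key : ∀ a ∈ A, ∀ b ∈ A, |f a - f b| ≤ (1/4) * dist (σ a) (σ b) ^ 2 := by
    intro a ha b hb
    obtain ⟨hpah, hpag⟩ := hP a ha
    obtain ⟨hpbh, hpbg⟩ := hP b hb
    have haB : a ∈ B := ha.1
    have hbB : b ∈ B := hb.1
    have h1 : f a - f b ≤ ⟪P a - P b, a - b⟫ := by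
      have hga : g a + ⟪P a, b - a⟫ ≤ g b := hpag b hbB
      have hhb : h b + ⟪P b, a - b⟫ ≤ h a := hpbh a haB
      have hfa : f a = g a - h a := hfgh a haB
      have hfb : f b = g b - h b := hfgh b hbB
      have hrw1 : ⟪P a, b - a⟫ = -⟪P a, a - b⟫ := by
        rw [show b - a = -(a - b) by abel, inner_neg_right]
      have hrw2 : ⟪P a - P b, a - b⟫ = ⟪P a, a - b⟫ - ⟪P b, a - b⟫ := inner_sub_left _ _ _
      rw [hrw1] at hga
      linarith
    have h2 : f b - f a ≤ ⟪P a - P b, a - b⟫ := by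
      have hgb : g b + ⟪P b, a - b⟫ ≤ g a := hpbg a haB
      have hha : h a + ⟪P a, b - a⟫ ≤ h b := hpah b hbB
      have hfa : f a = g a - h a := hfgh a haB
      have hfb : f b = g b - h b := hfgh b hbB
      have hrw1 : ⟪P a, b - a⟫ = -⟪P a, a - b⟫ := by
        rw [show b - a = -(a - b) by abel, inner_neg_right]
      have hrw2 : ⟪P a - P b, a - b⟫ = ⟪P a, a - b⟫ - ⟪P b, a - b⟫ := inner_sub_left _ _ _
      rw [hrw1] at hha
      linarith
    have h3 : ⟪P a - P b, a - b⟫ ≤ ‖(P a - P b) + (a - b)‖ ^ 2 / 4 :=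
      inner_le_quarter_norm_add_sq _ _
    have h4 : (P a - P b) + (a - b) = σ a - σ b := by
      simp only [hσdef]; abel
    rw [h4] at h3
    rw [abs_le]
    rw [dist_eq_norm]
    constructor <;> nlinarith [h1, h2, h3]
  set At : Set Eu := σ '' A with hAt
  set Fn : Eu → ℝ := fun u => f (Function.invFunOn σ A u) with hFn
  have hFnb : ∀ u ∈ At, ∀ v ∈ At, |Fn u - Fn v| ≤ (1/4) * dist u v ^ 2 := by
    intro u hu v hv
    obtain ⟨a, haA, hau⟩ := hu
    obtain ⟨b, hbA, hbv⟩ := hv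
    have hex1 : ∃ c ∈ A, σ c = u := ⟨a, haA, hau⟩
    have hex2 : ∃ c ∈ A, σ c = v := ⟨b, hbA, hbv⟩
    have h1 := Function.invFunOn_mem hex1
    have h2 := Function.invFunOn_eq hex1
    have h3 := Function.invFunOn_mem hex2
    have h4 := Function.invFunOn_eq hex2
    have := key _ h1 _ h3
    rw [h2, h4] at this
    exact this
  have himage : f '' A = Fn '' At := by
    apply Set.Subset.antisymm
    · rintro - ⟨a, haA, rfl⟩
      refine ⟨σ a, ⟨a, haA, rfl⟩, ?_⟩
      have hex : ∃ c ∈ A, σ c = σ a := ⟨a, haA, rfl⟩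
      have h1 := Function.invFunOn_mem hex
      have h2 := Function.invFunOn_eq hex
      have := key _ h1 _ haA
      rw [h2] at this
      simp only [dist_self] at this
      have : |f (Function.invFunOn σ A (σ a)) - f a| ≤ 0 := by
        simpa using this
      have heq : f (Function.invFunOn σ A (σ a)) = f a := by
        have := abs_nonpos_iff.1 this
        linarith [sub_eq_zero.1 this]
      show f (Function.invFunOn σ A (σ a)) = f a
      exact heq
    · rintro - ⟨u, ⟨a, haA, rfl⟩, rfl⟩
      have hex : ∃ c ∈ A, σ c = σ a := ⟨a, haA, rfl⟩
      exact ⟨Function.invFunOn σ A (σ a), Function.invFunOn_mem hex, rfl⟩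
  rw [himage]
  exact pure_lemma hn (by norm_num : (0:ℝ) ≤ 1/4) hFnb


end Euclidean

end Stmt18

end Stmt18AuxSection

/-- Morse–Sard theorem for locally DC functions in dimensions
`n ∈ {1,2}`: the set of values of `f` at its stationary points is `H^{n/2}`-null. -/
theorem stmt18 {n : ℕ} (hn : n = 1 ∨ n = 2) {U : Set (EuclideanSpace ℝ (Fin n))}
    (hU : IsOpen U) {f : EuclideanSpace ℝ (Fin n) → ℝ} (hf : LocallyDCOn f U) :
    μH[(n : ℝ) / 2]
      (f '' {x ∈ U | HasFDerivAt f (0 : EuclideanSpace ℝ (Fin n) →L[ℝ] ℝ) x}) = 0 := by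
  have hn0 : 0 < n := by rcases hn with h | h <;> simp [h]
  classical
  set S := {x ∈ U | HasFDerivAt f (0 : EuclideanSpace ℝ (Fin n) →L[ℝ] ℝ) x} with hS
  have hsel : ∀ x : EuclideanSpace ℝ (Fin n), ∃ r : ℝ, x ∈ S →
      (0 < r ∧ ∃ g h : EuclideanSpace ℝ (Fin n) → ℝ,
        ConvexOn ℝ (ball x r) g ∧ ConvexOn ℝ (ball x r) h ∧
        ContinuousOn g (ball x r) ∧ ContinuousOn h (ball x r) ∧
        ∀ y ∈ ball x r, f y = g y - h y) := by
    intro x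
    by_cases hx : x ∈ S
    · obtain ⟨Cs, hCconv, hCU, hCnhd, g, h, hgcv, hhcv, hgc, hhc, hfgh⟩ := hf x hx.1
      obtain ⟨r, hr0, hball⟩ := Metric.mem_nhds_iff.1 hCnhd
      exact ⟨r, fun _ => ⟨hr0, g, h, hgcv.subset hball (convex_ball x r),
        hhcv.subset hball (convex_ball x r), hgc.mono hball, hhc.mono hball,
        fun y hy => hfgh y (hball hy)⟩⟩
    · exact ⟨1, fun hc => absurd hc hx⟩
  choose rad hrad using hsel
  obtain ⟨t, htS, htc, htcov⟩ := TopologicalSpace.countable_cover_nhdsWithin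
    (f := fun x => ball x (rad x)) (s := S)
    (fun x hx => nhdsWithin_le_nhds (ball_mem_nhds x (hrad x hx).1))
  have hsub : f '' S ⊆ ⋃ x ∈ t,
      f '' {y ∈ ball x (rad x) | HasFDerivAt f (0 : EuclideanSpace ℝ (Fin n) →L[ℝ] ℝ) y} := by
    rintro - ⟨y, hyS, rfl⟩
    obtain ⟨x, hxt, hyx⟩ := Set.mem_iUnion₂.1 (htcov hyS)
    exact Set.mem_biUnion hxt ⟨y, ⟨hyx, hyS.2⟩, rfl⟩
  refine le_antisymm ?_ zero_le
  calc μH[(n:ℝ)/2] (f '' S) ≤ μH[(n:ℝ)/2] (⋃ x ∈ t,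
      f '' {y ∈ ball x (rad x) | HasFDerivAt f (0 : EuclideanSpace ℝ (Fin n) →L[ℝ] ℝ) y}) :=
        measure_mono hsub
  _ = 0 := by
      rw [measure_biUnion_null_iff htc]
      intro x hxt
      obtain ⟨hr0, g, h, hgcv, hhcv, hgc, hhc, hfgh⟩ := hrad x (htS hxt)
      exact Stmt18.piece hn0 hgcv hhcv hgc hhc hfgh
end
end
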